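/- arXiv:math/0306301 — 4 statements merged into one kernel-verified Lean document; each statement's English description precedes it below -/
import Mathlib

section
/- Let Φ be a Leonard system and set m_i = tr(E_i E*_0) for 0 ≤ i ≤ d. Then: (i) E_i E*_0 E_i = m_i E_i; (ii) E*_0 E_i E*_0 = m_i E*_0; (iii) m_i ≠ 0 for all i; (iv) ∑_{i=0}^d m_i = 1; (v) tr(E_0 E*_0) = tr(E*_0 E_0) (so m_0 equals the dual quantity m*_0 = tr(E*_0 E_0)). -/
open Matrix Polynomial

def IsTridiag {K : Type*} [Field K] {n : ℕ} (M : Matrix (Fin n) (Fin n) K) : Prop :=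
  ∀ i j : Fin n, ((i : ℕ) + 1 < j ∨ (j : ℕ) + 1 < i) → M i j = 0

def IsIrredTridiag {K : Type*} [Field K] {n : ℕ} (M : Matrix (Fin n) (Fin n) K) : Prop :=
  IsTridiag M ∧ ∀ i j : Fin n, ((i : ℕ) + 1 = j ∨ (j : ℕ) + 1 = i) → M i j ≠ 0

/-- Entry of a matrix with natural-number indices; `0` when out of range. -/
def mentry {K : Type*} [Field K] {n : ℕ} (M : Matrix (Fin n) (Fin n) K) (i j : ℕ) : K :=
  if h : i < n ∧ j < n then M ⟨i, h.1⟩ ⟨j, h.2⟩ else 0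

/-- A family indexed by `Fin (d+1)` viewed as indexed by `ℕ`, with value `0` out of range. -/
def natIdx {d : ℕ} {M : Type*} [Zero M] (E : Fin (d+1) → M) (n : ℕ) : M :=
  if h : n < d + 1 then E ⟨n, h⟩ else 0

/-- A Leonard system of diameter `d` in the matrix algebra `Mat_{d+1}(K)`:
`A`, `As` are multiplicity-free with eigenvalues `θ i`, `θs i` and primitive
idempotents `E i`, `Es i`, satisfying the tridiagonal conditions. -/
structure LeonardSystem (K : Type*) [Field K] (d : ℕ) where
  A : Matrix (Fin (d+1)) (Fin (d+1)) K
  As : Matrix (Fin (d+1)) (Fin (d+1)) K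
  E : Fin (d+1) → Matrix (Fin (d+1)) (Fin (d+1)) K
  Es : Fin (d+1) → Matrix (Fin (d+1)) (Fin (d+1)) K
  θ : Fin (d+1) → K
  θs : Fin (d+1) → K
  θ_inj : Function.Injective θ
  θs_inj : Function.Injective θs
  E_ne : ∀ i, E i ≠ 0
  Es_ne : ∀ i, Es i ≠ 0
  E_mul : ∀ i j, E i * E j = if i = j then E i else 0
  Es_mul : ∀ i j, Es i * Es j = if i = j then Es i else 0
  E_sum : ∑ i, E i = 1
  Es_sum : ∑ i, Es i = 1
  A_eq : A = ∑ i, θ i • E i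
  As_eq : As = ∑ i, θs i • Es i
  EAsE_zero : ∀ i j : Fin (d+1), ((i:ℕ) + 1 < j ∨ (j:ℕ) + 1 < i) → E i * As * E j = 0
  EAsE_ne : ∀ i j : Fin (d+1), ((i:ℕ) + 1 = j ∨ (j:ℕ) + 1 = i) → E i * As * E j ≠ 0
  EsAEs_zero : ∀ i j : Fin (d+1), ((i:ℕ) + 1 < j ∨ (j:ℕ) + 1 < i) → Es i * A * Es j = 0
  EsAEs_ne : ∀ i j : Fin (d+1), ((i:ℕ) + 1 = j ∨ (j:ℕ) + 1 = i) → Es i * A * Es j ≠ 0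

/-- A Leonard pair in `Mat_{d+1}(K)`. -/
structure LeonardPair (K : Type*) [Field K] (d : ℕ) where
  A : Matrix (Fin (d+1)) (Fin (d+1)) K
  As : Matrix (Fin (d+1)) (Fin (d+1)) K
  cond1 : ∃ P : Matrix (Fin (d+1)) (Fin (d+1)) K, IsUnit P ∧
    IsIrredTridiag (P⁻¹ * A * P) ∧ (P⁻¹ * As * P).IsDiag
  cond2 : ∃ P : Matrix (Fin (d+1)) (Fin (d+1)) K, IsUnit P ∧
    (P⁻¹ * A * P).IsDiag ∧ IsIrredTridiag (P⁻¹ * As * P)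

section LSHelpers
variable {K : Type*} [Field K] {n : ℕ}


variable {K : Type*} [Field K] {n : ℕ}

lemma vmv_mul_vmv (p q u v : Fin n → K) :
    vecMulVec p q * vecMulVec u v = (q ⬝ᵥ u) • vecMulVec p v := by
  ext i j
  simp only [mul_apply, vecMulVec_apply, Matrix.smul_apply, smul_eq_mul, dotProduct, Finset.sum_mul]
  rw [Finset.sum_congr rfl (fun k _ => by ring : ∀ k ∈ Finset.univ, p i * q k * (u k * v j) = q k * u k * (p i * v j))]

lemma mul_vmv (M : Matrix (Fin n) (Fin n) K) (u v : Fin n → K) :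
    M * vecMulVec u v = vecMulVec (M *ᵥ u) v := by
  ext i j
  simp only [mul_apply, vecMulVec_apply, mulVec, dotProduct, Finset.sum_mul]
  exact Finset.sum_congr rfl fun k _ => by ring

lemma vmv_mul (u v : Fin n → K) (M : Matrix (Fin n) (Fin n) K) :
    vecMulVec u v * M = vecMulVec u (v ᵥ* M) := by
  ext i j
  simp only [mul_apply, vecMulVec_apply, vecMul, dotProduct, Finset.mul_sum]
  exact Finset.sum_congr rfl fun k _ => by ring

lemma vmv_ne_zero {p q : Fin n → K} (hp : p ≠ 0) (hq : q ≠ 0) : vecMulVec p q ≠ 0 := by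
  obtain ⟨i, hi⟩ := Function.ne_iff.mp hp
  obtain ⟨j, hj⟩ := Function.ne_iff.mp hq
  intro h
  have := congrFun (congrFun h i) j
  simp only [vecMulVec_apply, Matrix.zero_apply] at this
  exact (mul_ne_zero hi hj) this

lemma trace_vmv (p q : Fin n → K) : Matrix.trace (vecMulVec p q) = p ⬝ᵥ q := by
  simp [Matrix.trace, Matrix.diag, vecMulVec_apply, dotProduct]

lemma vmv_smul_right (p q : Fin n → K) (c : K) :
    vecMulVec p (c • q) = c • vecMulVec p q := by
  ext i j; simp [vecMulVec_apply, mul_left_comm]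

lemma vmv_mulVec (u v w : Fin n → K) : vecMulVec u v *ᵥ w = (v ⬝ᵥ w) • u := by
  ext i; simp [mulVec, vecMulVec_apply, dotProduct, Finset.sum_mul, Finset.mul_sum, mul_assoc]
  exact Finset.sum_congr rfl fun k _ => by ring

lemma vmv_smul_left (p q : Fin n → K) (c : K) :
    vecMulVec (c • p) q = c • vecMulVec p q := by
  ext i j; simp [vecMulVec_apply, mul_assoc]

lemma vmv_transpose (p q : Fin n → K) :
    (vecMulVec p q)ᵀ = vecMulVec q p := by
  ext i j; simp [vecMulVec_apply, transpose_apply, mul_comm]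


variable {K : Type*} [Field K] {n : ℕ}

lemma rank_step (F : Fin n → Matrix (Fin n) (Fin n) K)
    (hmul : ∀ i j, F i * F j = if i = j then F i else 0) :
    ∀ s : Finset (Fin n),
      ∑ i ∈ s, Module.finrank K (LinearMap.range (F i).mulVecLin) ≤
        Module.finrank K (LinearMap.range (∑ i ∈ s, F i).mulVecLin) := by
  intro s
  induction s using Finset.induction with
  | empty => simp
  | @insert a s ha ih =>
    set S : Matrix (Fin n) (Fin n) K := ∑ i ∈ s, F i with hS
    have hFaS : F a * S = 0 := by
      rw [hS, Finset.mul_sum]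
      refine Finset.sum_eq_zero fun j hj => ?_
      rw [hmul a j, if_neg (by rintro rfl; exact ha hj)]
    have hSFa : S * F a = 0 := by
      rw [hS, Finset.sum_mul]
      refine Finset.sum_eq_zero fun j hj => ?_
      rw [hmul j a, if_neg (by rintro rfl; exact ha hj)]
    have hFaa : F a * F a = F a := by rw [hmul a a, if_pos rfl]
    have hSS : S * S = S := by
      rw [hS, Finset.sum_mul]
      refine Finset.sum_congr rfl fun j hj => ?_
      rw [Finset.mul_sum,
        Finset.sum_eq_single j (fun k _ hkj => by rw [hmul j k, if_neg (Ne.symm hkj)])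
          (fun h => absurd hj h),
        hmul j j, if_pos rfl]
    set Ra := LinearMap.range (F a).mulVecLin with hRa
    set Rs := LinearMap.range S.mulVecLin with hRs
    have hle1 : Ra ≤ LinearMap.range (F a + S).mulVecLin := by
      rintro x ⟨y, rfl⟩
      exact ⟨(F a).mulVecLin y, by
        simp only [mulVecLin_apply, mulVec_mulVec, add_mul, hFaa, hSFa, add_zero]⟩
    have hle2 : Rs ≤ LinearMap.range (F a + S).mulVecLin := by
      rintro x ⟨y, rfl⟩
      exact ⟨S.mulVecLin y, by
        simp only [mulVecLin_apply, mulVec_mulVec, add_mul, hSS, hFaS, zero_add]⟩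
    have hinf : Ra ⊓ Rs = ⊥ := by
      rw [Submodule.eq_bot_iff]
      rintro x ⟨⟨y, hy⟩, ⟨z, hz⟩⟩
      have h1 : (F a).mulVecLin x = x := by
        rw [← hy]; simp only [mulVecLin_apply, mulVec_mulVec, hFaa]
      have h2 : (F a).mulVecLin x = 0 := by
        rw [← hz]; simp only [mulVecLin_apply, mulVec_mulVec, hFaS, zero_mulVec]
      rw [← h1, h2]
    have hsup : Module.finrank K ↥(Ra ⊔ Rs) =
        Module.finrank K Ra + Module.finrank K Rs := by
      have := Submodule.finrank_sup_add_finrank_inf_eq Ra Rs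
      rw [hinf, finrank_bot, add_zero] at this
      exact this
    rw [Finset.sum_insert ha, Finset.sum_insert ha]
    calc Module.finrank K Ra + ∑ i ∈ s, Module.finrank K (LinearMap.range (F i).mulVecLin)
        ≤ Module.finrank K Ra + Module.finrank K Rs := Nat.add_le_add_left ih _
      _ = Module.finrank K ↥(Ra ⊔ Rs) := hsup.symm
      _ ≤ _ := Submodule.finrank_mono (sup_le hle1 hle2)

lemma rankOne_decomp (F : Fin n → Matrix (Fin n) (Fin n) K)
    (hne : ∀ i, F i ≠ 0)
    (hmul : ∀ i j, F i * F j = if i = j then F i else 0)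
    (hsum : ∑ i, F i = 1) (i : Fin n) :
    ∃ p q : Fin n → K, F i = vecMulVec p q ∧ q ⬝ᵥ p = 1 := by
  have key := rank_step F hmul Finset.univ
  rw [hsum] at key
  have hone : Module.finrank K (LinearMap.range (1 : Matrix (Fin n) (Fin n) K).mulVecLin) = n := by
    have : (1 : Matrix (Fin n) (Fin n) K).mulVecLin = LinearMap.id := by
      ext v; simp
    rw [this, LinearMap.range_id, finrank_top, Module.finrank_fintype_fun_eq_card,
      Fintype.card_fin]
  rw [hone] at key
  -- each rank ≥ 1
  have hge : ∀ j, 1 ≤ Module.finrank K (LinearMap.range (F j).mulVecLin) := by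
    intro j
    rcases Nat.eq_zero_or_pos (Module.finrank K (LinearMap.range (F j).mulVecLin)) with h | h
    · exfalso
      have hbot : LinearMap.range (F j).mulVecLin = ⊥ := Submodule.finrank_eq_zero.mp h
      apply hne j
      ext x y
      have hmem : (F j).mulVecLin (Pi.single y 1) ∈ LinearMap.range (F j).mulVecLin :=
        LinearMap.mem_range_self _ _
      rw [hbot, Submodule.mem_bot] at hmem
      have := congrFun hmem x
      simpa [Matrix.mulVecLin_apply] using this
    · exact h
  -- rank of F i ≤ 1
  have hle : Module.finrank K (LinearMap.range (F i).mulVecLin) ≤ 1 := by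
    have h1 : ∀ j, 1 ≤ Module.finrank K (LinearMap.range (F j).mulVecLin) := hge
    by_contra hcon
    push_neg at hcon
    have : n + 1 ≤ ∑ j, Module.finrank K (LinearMap.range (F j).mulVecLin) := by
      calc n + 1 = (∑ _j : Fin n, 1) + 1 := by simp
        _ ≤ (∑ j ∈ Finset.univ.erase i, Module.finrank K (LinearMap.range (F j).mulVecLin)) + 2 := by
            rw [← Finset.sum_erase_add _ _ (Finset.mem_univ i)]
            have : ∑ _j ∈ Finset.univ.erase i, 1 ≤
                ∑ j ∈ Finset.univ.erase i, Module.finrank K (LinearMap.range (F j).mulVecLin) :=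
              Finset.sum_le_sum fun j _ => h1 j
            simp only [Finset.sum_const, smul_eq_mul, mul_one] at this ⊢
            omega
        _ ≤ ∑ j, Module.finrank K (LinearMap.range (F j).mulVecLin) := by
            rw [← Finset.sum_erase_add _ _ (Finset.mem_univ i)]
            omega
    omega
  -- get a nonzero column
  have hcol : ∃ c : Fin n, (fun x => F i x c) ≠ 0 := by
    by_contra h
    push_neg at h
    apply hne i
    ext x y
    exact congrFun (h y) x
  obtain ⟨c0, hc0⟩ := hcol
  set p : Fin n → K := fun x => F i x c0 with hp
  have hpmem : p ∈ LinearMap.range (F i).mulVecLin :=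
    ⟨Pi.single c0 1, by ext x; simp [Matrix.mulVecLin_apply, hp]⟩
  have hspan : (K ∙ p) = LinearMap.range (F i).mulVecLin := by
    apply Submodule.eq_of_le_of_finrank_le
    · rwa [Submodule.span_singleton_le_iff_mem]
    · rw [finrank_span_singleton hc0]
      exact hle
  have hcols : ∀ j : Fin n, ∃ a : K, a • p = fun x => F i x j := by
    intro j
    rw [← Submodule.mem_span_singleton, hspan]
    exact ⟨Pi.single j 1, by ext x; simp [Matrix.mulVecLin_apply]⟩
  choose q hq using hcols
  have hFi : F i = vecMulVec p q := by
    ext x j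
    have := congrFun (hq j) x
    simp only [Pi.smul_apply, smul_eq_mul] at this
    rw [vecMulVec_apply, ← this, mul_comm]
  have hqp : q ⬝ᵥ p = 1 := by
    have h2 : F i * F i = F i := by rw [hmul i i, if_pos rfl]
    rw [hFi, vmv_mul_vmv] at h2
    have h3 : (q ⬝ᵥ p - 1) • vecMulVec p q = 0 := by
      rw [sub_smul, one_smul, h2, sub_self]
    rcases smul_eq_zero.mp h3 with h4 | h4
    · exact sub_eq_zero.mp h4
    · exact absurd (hFi.trans h4) (hne i)
  exact ⟨p, q, hFi, hqp⟩

end LSHelpers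

section LSKey
variable {K : Type*} [Field K] {d : ℕ}
lemma sum_mulVec' {n : ℕ} {ι : Type*} (s : Finset ι) (M : ι → Matrix (Fin n) (Fin n) K)
    (v : Fin n → K) : (∑ i ∈ s, M i) *ᵥ v = ∑ i ∈ s, M i *ᵥ v := by
  ext x
  simp only [mulVec, dotProduct, Matrix.sum_apply, Finset.sum_apply, Finset.sum_mul]
  rw [Finset.sum_comm]

lemma mulVec_sumvec {n : ℕ} {ι : Type*} (s : Finset ι) (M : Matrix (Fin n) (Fin n) K)
    (w : ι → (Fin n → K)) : M *ᵥ (∑ i ∈ s, w i) = ∑ i ∈ s, M *ᵥ w i := by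
  ext x
  simp only [mulVec, dotProduct, Finset.sum_apply, Finset.mul_sum]
  rw [Finset.sum_comm]

lemma dot_sum {n : ℕ} {ι : Type*} (s : Finset ι) (v : Fin n → K) (w : ι → (Fin n → K)) :
    v ⬝ᵥ (∑ i ∈ s, w i) = ∑ i ∈ s, v ⬝ᵥ w i := by
  simp only [dotProduct, Finset.sum_apply, Finset.mul_sum]
  rw [Finset.sum_comm]

lemma key (A : Matrix (Fin (d+1)) (Fin (d+1)) K)
    (P Q : Fin (d+1) → (Fin (d+1) → K))
    (hsum : ∑ j, vecMulVec (P j) (Q j) = 1)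
    (hQP : ∀ j r : Fin (d+1), Q j ⬝ᵥ P r = if j = r then 1 else 0)
    (ha0 : ∀ j r : Fin (d+1), ((j:ℕ)+1 < r ∨ (r:ℕ)+1 < j) → Q j ⬝ᵥ (A *ᵥ P r) = 0)
    (ha1 : ∀ j r : Fin (d+1), ((j:ℕ)+1 = r ∨ (r:ℕ)+1 = j) → Q j ⬝ᵥ (A *ᵥ P r) ≠ 0)
    (q : Fin (d+1) → K) (θ : K) (hq : q ≠ 0) (hqA : q ᵥ* A = θ • q)
    (hqP0 : q ⬝ᵥ P 0 = 0) : False := by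
  classical
  set t : Fin (d+1) → ℕ → K := fun j k => Q j ⬝ᵥ ((A ^ k) *ᵥ P 0) with ht
  have tzero_base : ∀ j : Fin (d+1), t j 0 = if j = 0 then 1 else 0 := by
    intro j; simp only [ht, pow_zero, one_mulVec]; exact hQP j 0
  have trec : ∀ (j : Fin (d+1)) (k : ℕ),
      t j (k+1) = ∑ r, (Q j ⬝ᵥ (A *ᵥ P r)) * t r k := by
    intro j k
    have hw : (A ^ (k+1)) *ᵥ P 0 = A *ᵥ ((1 : Matrix (Fin (d+1)) (Fin (d+1)) K) *ᵥ ((A ^ k) *ᵥ P 0)) := by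
      rw [one_mulVec, mulVec_mulVec, ← pow_succ']
    rw [ht]
    simp only
    rw [hw, ← hsum]
    have hsplit : (∑ r, vecMulVec (P r) (Q r)) *ᵥ ((A ^ k) *ᵥ P 0)
        = ∑ r, t r k • P r := by
      rw [sum_mulVec']
      exact Finset.sum_congr rfl fun r _ => vmv_mulVec _ _ _
    rw [hsplit, mulVec_sumvec, dot_sum]
    refine Finset.sum_congr rfl fun r _ => ?_
    rw [mulVec_smul, dotProduct_smul, smul_eq_mul, mul_comm]
  -- triangularity
  have tzero : ∀ (k : ℕ) (j : Fin (d+1)), k < (j:ℕ) → t j k = 0 := by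
    intro k
    induction k with
    | zero =>
      intro j hj
      rw [tzero_base, if_neg]
      intro h; rw [h] at hj; simp at hj
    | succ k ih =>
      intro j hj
      rw [trec]
      refine Finset.sum_eq_zero fun r _ => ?_
      by_cases hr : (r:ℕ)+1 < (j:ℕ)
      · rw [ha0 j r (Or.inr hr), zero_mul]
      · rw [ih r (by omega), mul_zero]
  have tdiag : ∀ (k : ℕ) (hk : k < d+1), t ⟨k, hk⟩ k ≠ 0 := by
    intro k
    induction k with
    | zero =>
      intro hk
      rw [tzero_base]
      simp
    | succ k ih =>
      intro hk
      have hk' : k < d + 1 := by omega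
      rw [trec]
      rw [Finset.sum_eq_single (⟨k, hk'⟩ : Fin (d+1))]
      · exact mul_ne_zero (ha1 ⟨k+1, hk⟩ ⟨k, hk'⟩ (Or.inr rfl)) (ih hk')
      · intro r _ hr
        by_cases h2 : (r:ℕ)+1 < k+1
        · rw [ha0 ⟨k+1, hk⟩ r (Or.inr h2), zero_mul]
        · have : k < (r:ℕ) := by
            have : (r:ℕ) ≠ k := fun h => hr (Fin.ext h)
            omega
          rw [tzero k r this, mul_zero]
      · intro h; exact absurd (Finset.mem_univ _) h
  -- the matrices
  set N : Matrix (Fin (d+1)) (Fin (d+1)) K := Matrix.of (fun j k => t j (k:ℕ)) with hN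
  set U : Matrix (Fin (d+1)) (Fin (d+1)) K := Matrix.of (fun x k => ((A ^ (k:ℕ)) *ᵥ P 0) x) with hU
  set Qm : Matrix (Fin (d+1)) (Fin (d+1)) K := Matrix.of (fun j x => Q j x) with hQm
  have hNQU : N = Qm * U := by
    ext j k
    simp only [hN, hU, hQm, Matrix.of_apply, mul_apply, ht, dotProduct]
  have hNtri : N.BlockTriangular id := by
    intro j k hjk
    simp only [id_eq] at hjk
    exact tzero (k:ℕ) j hjk
  have hdetN : N.det ≠ 0 := by
    rw [Matrix.det_of_upperTriangular hNtri]
    refine Finset.prod_ne_zero_iff.mpr fun k _ => ?_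
    have := tdiag (k:ℕ) k.isLt
    simpa only [hN, Matrix.of_apply, Fin.eta] using this
  have hdetU : IsUnit U.det := by
    rw [hNQU, Matrix.det_mul] at hdetN
    exact isUnit_iff_ne_zero.mpr (right_ne_zero_of_mul hdetN)
  -- q kills U
  have hqU : q ᵥ* U = 0 := by
    have hpow : ∀ k : ℕ, q ⬝ᵥ ((A ^ k) *ᵥ P 0) = θ ^ k * (q ⬝ᵥ P 0) := by
      intro k
      induction k with
      | zero => simp [one_mulVec]
      | succ k ih =>
        have : (A ^ (k+1)) *ᵥ P 0 = A *ᵥ ((A ^ k) *ᵥ P 0) := by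
          rw [mulVec_mulVec, ← pow_succ']
        rw [this, dotProduct_mulVec, hqA, smul_dotProduct, smul_eq_mul, ih, pow_succ']
        ring
    ext k
    simp only [vecMul, Pi.zero_apply, hU]
    have : (fun x => q x) ⬝ᵥ (fun x => ((A ^ (k:ℕ)) *ᵥ P 0) x) = q ⬝ᵥ ((A ^ (k:ℕ)) *ᵥ P 0) := rfl
    calc q ⬝ᵥ (fun x => U x k) = q ⬝ᵥ ((A ^ (k:ℕ)) *ᵥ P 0) := rfl
      _ = 0 := by rw [hpow, hqP0, mul_zero]
  have : q = 0 := by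
    have h1 : q ᵥ* (U * U⁻¹) = q := by
      rw [Matrix.mul_nonsing_inv U hdetU, vecMul_one]
    rw [← Matrix.vecMul_vecMul, hqU, zero_vecMul] at h1
    exact h1.symm
  exact hq this

end LSKey

theorem stmt13 {K : Type*} [Field K] {d : ℕ} (L : LeonardSystem K d)
    (m : Fin (d+1) → K) (hm : ∀ i, m i = Matrix.trace (L.E i * L.Es 0)) :
    (∀ i, L.E i * L.Es 0 * L.E i = m i • L.E i) ∧
    (∀ i, L.Es 0 * L.E i * L.Es 0 = m i • L.Es 0) ∧
    (∀ i, m i ≠ 0) ∧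
    (∑ i, m i = 1) ∧
    Matrix.trace (L.E 0 * L.Es 0) = Matrix.trace (L.Es 0 * L.E 0) := by
  classical
  choose pE qE hE hqpE using rankOne_decomp L.E L.E_ne L.E_mul L.E_sum
  choose pS qS hS hqpS using rankOne_decomp L.Es L.Es_ne L.Es_mul L.Es_sum
  have hpEne : ∀ i, pE i ≠ 0 := by
    intro i h
    have := hqpE i
    rw [h, dotProduct_zero] at this
    exact zero_ne_one this
  have hqEne : ∀ i, qE i ≠ 0 := by
    intro i h
    have := hqpE i
    rw [h, zero_dotProduct] at this
    exact zero_ne_one this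
  have hpSne : ∀ i, pS i ≠ 0 := by
    intro i h
    have := hqpS i
    rw [h, dotProduct_zero] at this
    exact zero_ne_one this
  have hqSne : ∀ i, qS i ≠ 0 := by
    intro i h
    have := hqpS i
    rw [h, zero_dotProduct] at this
    exact zero_ne_one this
  have hQP : ∀ j r : Fin (d+1), qS j ⬝ᵥ pS r = if j = r then 1 else 0 := by
    intro j r
    by_cases hjr : j = r
    · subst hjr; rw [if_pos rfl]; exact hqpS j
    · rw [if_neg hjr]
      have h0 := L.Es_mul j r
      rw [if_neg hjr, hS j, hS r, vmv_mul_vmv] at h0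
      rcases smul_eq_zero.mp h0 with h | h
      · exact h
      · exact absurd h (vmv_ne_zero (hpSne j) (hqSne r))
  have hEsAEs : ∀ j r : Fin (d+1), L.Es j * L.A * L.Es r
      = (qS j ⬝ᵥ (L.A *ᵥ pS r)) • vecMulVec (pS j) (qS r) := by
    intro j r
    rw [hS j, hS r, mul_assoc, mul_vmv, vmv_mul_vmv]
  have ha0 : ∀ j r : Fin (d+1), ((j:ℕ)+1 < r ∨ (r:ℕ)+1 < j) → qS j ⬝ᵥ (L.A *ᵥ pS r) = 0 := by
    intro j r hc
    have h0 := L.EsAEs_zero j r hc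
    rw [hEsAEs] at h0
    rcases smul_eq_zero.mp h0 with h | h
    · exact h
    · exact absurd h (vmv_ne_zero (hpSne j) (hqSne r))
  have ha1 : ∀ j r : Fin (d+1), ((j:ℕ)+1 = r ∨ (r:ℕ)+1 = j) → qS j ⬝ᵥ (L.A *ᵥ pS r) ≠ 0 := by
    intro j r hc h
    exact L.EsAEs_ne j r hc (by rw [hEsAEs, h, zero_smul])
  have hsumS : ∑ j, vecMulVec (pS j) (qS j) = 1 := by
    rw [← L.Es_sum]
    exact Finset.sum_congr rfl fun j _ => (hS j).symm
  -- eigenvalue facts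
  have hEA : ∀ r, L.E r * L.A = L.θ r • L.E r := by
    intro r
    rw [L.A_eq, Finset.mul_sum]
    rw [Finset.sum_eq_single r (fun i _ hir => by
      rw [mul_smul_comm, L.E_mul r i, if_neg (Ne.symm hir), smul_zero])
      (fun h => absurd (Finset.mem_univ r) h)]
    rw [mul_smul_comm, L.E_mul r r, if_pos rfl]
  have hAE : ∀ r, L.A * L.E r = L.θ r • L.E r := by
    intro r
    rw [L.A_eq, Finset.sum_mul]
    rw [Finset.sum_eq_single r (fun i _ hir => by
      rw [smul_mul_assoc, L.E_mul i r, if_neg hir, smul_zero])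
      (fun h => absurd (Finset.mem_univ r) h)]
    rw [smul_mul_assoc, L.E_mul r r, if_pos rfl]
  have hqA : ∀ r, qE r ᵥ* L.A = L.θ r • qE r := by
    intro r
    have h1 : vecMulVec (pE r) (qE r ᵥ* L.A) = vecMulVec (pE r) (L.θ r • qE r) := by
      rw [← vmv_mul, ← hE r, hEA r, hE r, vmv_smul_right]
    obtain ⟨x0, hx0⟩ := Function.ne_iff.mp (hpEne r)
    funext j
    have := congrFun (congrFun h1 x0) j
    rw [vecMulVec_apply, vecMulVec_apply] at this
    exact mul_left_cancel₀ hx0 this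
  have hApE : ∀ r, L.A *ᵥ pE r = L.θ r • pE r := by
    intro r
    have h1 : vecMulVec (L.A *ᵥ pE r) (qE r) = vecMulVec (L.θ r • pE r) (qE r) := by
      rw [← mul_vmv, ← hE r, hAE r, hE r, vmv_smul_left]
    obtain ⟨j0, hj0⟩ := Function.ne_iff.mp (hqEne r)
    funext x
    have := congrFun (congrFun h1 x) j0
    rw [vecMulVec_apply, vecMulVec_apply] at this
    exact mul_right_cancel₀ hj0 this
  -- first application of key
  have hKey1 : ∀ r, qE r ⬝ᵥ pS 0 ≠ 0 := fun r h0 =>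
    key L.A pS qS hsumS hQP ha0 ha1 (qE r) (L.θ r) (hqEne r) (hqA r) h0
  -- transposed application
  have hsumT : ∑ j, vecMulVec (qS j) (pS j) = 1 := by
    have := congrArg Matrix.transpose hsumS
    rw [Matrix.transpose_sum, Matrix.transpose_one] at this
    rw [← this]
    exact Finset.sum_congr rfl fun j _ => (vmv_transpose (pS j) (qS j)).symm
  have hQPT : ∀ j r : Fin (d+1), pS j ⬝ᵥ qS r = if j = r then 1 else 0 := by
    intro j r
    rw [dotProduct_comm, hQP r j]
    exact if_congr eq_comm rfl rfl
  have hdotT : ∀ j r : Fin (d+1), pS j ⬝ᵥ (L.Aᵀ *ᵥ qS r) = qS r ⬝ᵥ (L.A *ᵥ pS j) := by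
    intro j r
    rw [mulVec_transpose, dotProduct_comm, ← dotProduct_mulVec]
  have ha0T : ∀ j r : Fin (d+1), ((j:ℕ)+1 < r ∨ (r:ℕ)+1 < j) → pS j ⬝ᵥ (L.Aᵀ *ᵥ qS r) = 0 := by
    intro j r hc
    rw [hdotT]
    exact ha0 r j hc.symm
  have ha1T : ∀ j r : Fin (d+1), ((j:ℕ)+1 = r ∨ (r:ℕ)+1 = j) → pS j ⬝ᵥ (L.Aᵀ *ᵥ qS r) ≠ 0 := by
    intro j r hc
    rw [hdotT]
    exact ha1 r j hc.symm
  have hKey2 : ∀ r, pE r ⬝ᵥ qS 0 ≠ 0 := by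
    intro r h0
    refine key L.Aᵀ qS pS hsumT hQPT ha0T ha1T (pE r) (L.θ r) (hpEne r) ?_ h0
    rw [vecMul_transpose]
    exact hApE r
  -- value of m
  have hmval : ∀ i, m i = (qE i ⬝ᵥ pS 0) * (pE i ⬝ᵥ qS 0) := by
    intro i
    rw [hm i, hE i, hS 0, vmv_mul_vmv, Matrix.trace_smul, trace_vmv, smul_eq_mul]
  refine ⟨?_, ?_, ?_, ?_, ?_⟩
  · intro i
    rw [hE i, hS 0, vmv_mul_vmv, smul_mul_assoc, vmv_mul_vmv, smul_smul, hmval i,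
      dotProduct_comm (qS 0) (pE i), ← hE i]
  · intro i
    rw [hS 0, hE i, vmv_mul_vmv, smul_mul_assoc, vmv_mul_vmv, smul_smul, hmval i,
      dotProduct_comm (qS 0) (pE i)]
    rw [← hS 0]
    ring_nf
  · intro i
    rw [hmval i]
    exact mul_ne_zero (hKey1 i) (hKey2 i)
  · calc ∑ i, m i = ∑ i, Matrix.trace (L.E i * L.Es 0) := Finset.sum_congr rfl fun i _ => hm i
      _ = Matrix.trace ((∑ i, L.E i) * L.Es 0) := by rw [Finset.sum_mul, Matrix.trace_sum]
      _ = Matrix.trace (L.Es 0) := by rw [L.E_sum, one_mul]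
      _ = pS 0 ⬝ᵥ qS 0 := by rw [hS 0, trace_vmv]
      _ = 1 := by rw [dotProduct_comm]; exact hqpS 0
  · exact Matrix.trace_mul_comm _ _
end

section
/- Let Φ be a Leonard system, V an irreducible 𝒜-module, and u a nonzero vector in E_0 V. Then E*_i u ≠ 0 for 0 ≤ i ≤ d, and E*_0 u, E*_1 u, …, E*_d u is a basis of V. Moreover, a sequence of vectors v_0,…,v_d in V, not all zero, arises this way if and only if v_i ∈ E*_i V for all i and ∑_{i=0}^d v_i ∈ E_0 V. -/
open Matrix Polynomial

section Stmt14Aux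

variable {K : Type*} [Field K] {d : ℕ}

private lemma mulVec_sumv {ι : Type*} (M : Matrix (Fin (d+1)) (Fin (d+1)) K)
    (s : Finset ι) (f : ι → (Fin (d+1) → K)) :
    M *ᵥ (∑ i ∈ s, f i) = ∑ i ∈ s, M *ᵥ f i := by
  simpa only [Matrix.mulVecLin_apply] using map_sum M.mulVecLin f s

private lemma sum_mulVecv {ι : Type*} (s : Finset ι)
    (M : ι → Matrix (Fin (d+1)) (Fin (d+1)) K) (x : Fin (d+1) → K) :
    (∑ i ∈ s, M i) *ᵥ x = ∑ i ∈ s, M i *ᵥ x := by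
  induction s using Finset.cons_induction with
  | empty => simp
  | cons a s ha ih => simp [Finset.sum_cons, Matrix.add_mulVec, ih]

private lemma exists_mulVec_ne {M : Matrix (Fin (d+1)) (Fin (d+1)) K} (h : M ≠ 0) :
    ∃ x, M *ᵥ x ≠ 0 := by
  by_contra hx
  push_neg at hx
  apply h
  ext i j
  have h2 := congrFun (hx (Pi.single j 1)) i
  simpa using h2

private lemma sum_smul_mul_idem (E : Fin (d+1) → Matrix (Fin (d+1)) (Fin (d+1)) K)
    (θ : Fin (d+1) → K)
    (hmul : ∀ i j, E i * E j = if i = j then E i else 0) (m : Fin (d+1)) :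
    (∑ i, θ i • E i) * E m = θ m • E m := by
  rw [Finset.sum_mul, Finset.sum_eq_single m]
  · rw [smul_mul_assoc, hmul m m, if_pos rfl]
  · intro i _ hi
    rw [smul_mul_assoc, hmul i m, if_neg hi, smul_zero]
  · simp

private lemma mul_idem_sum_smul (E : Fin (d+1) → Matrix (Fin (d+1)) (Fin (d+1)) K)
    (θ : Fin (d+1) → K)
    (hmul : ∀ i j, E i * E j = if i = j then E i else 0) (m : Fin (d+1)) :
    E m * (∑ i, θ i • E i) = θ m • E m := by
  rw [Finset.mul_sum, Finset.sum_eq_single m]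
  · rw [Matrix.mul_smul, hmul m m, if_pos rfl]
  · intro i _ hi
    rw [Matrix.mul_smul, hmul m i, if_neg (Ne.symm hi), smul_zero]
  · simp

private lemma coords_unique (b : Module.Basis (Fin (d+1)) K (Fin (d+1) → K))
    (f g : Fin (d+1) → K) (h : ∑ k, f k • b k = ∑ k, g k • b k) : f = g := by
  have h2 : ∑ k, (f k - g k) • b k = 0 := by
    simp only [sub_smul, Finset.sum_sub_distrib, h, sub_self]
  funext k
  have h3 := Fintype.linearIndependent_iff.mp b.linearIndependent (fun k => f k - g k) h2 k
  exact sub_eq_zero.mp h3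

private lemma smul_cancel {u : Fin (d+1) → K} (hu : u ≠ 0) {a b : K}
    (h : a • u = b • u) : a = b := by
  have h2 : (a - b) • u = 0 := by rw [sub_smul, h, sub_self]
  rcases smul_eq_zero.mp h2 with h3 | h3
  · exact sub_eq_zero.mp h3
  · exact absurd h3 hu

private lemma exists_adapted_basis (E : Fin (d+1) → Matrix (Fin (d+1)) (Fin (d+1)) K)
    (hmul : ∀ i j, E i * E j = if i = j then E i else 0)
    (hne : ∀ i, E i ≠ 0) :
    ∃ b : Module.Basis (Fin (d+1)) K (Fin (d+1) → K),
      (∀ i j, E j *ᵥ b i = if j = i then b i else 0) ∧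
      (∀ j x, ∃ lam : K, E j *ᵥ x = lam • b j) := by
  have hv : ∀ i, ∃ x, E i *ᵥ x ≠ 0 := fun i => exists_mulVec_ne (hne i)
  choose v hv using hv
  set w : Fin (d+1) → (Fin (d+1) → K) := fun i => E i *ᵥ v i with hw
  have orth : ∀ i j, E j *ᵥ w i = if j = i then w i else 0 := by
    intro i j
    rw [hw]
    show E j *ᵥ (E i *ᵥ v i) = _
    rw [Matrix.mulVec_mulVec, hmul j i]
    split_ifs with hji
    · subst hji; rfl
    · rw [Matrix.zero_mulVec]
  have li : LinearIndependent K w := by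
    rw [Fintype.linearIndependent_iff]
    intro g hg j
    have h2 : E j *ᵥ (∑ i, g i • w i) = 0 := by rw [hg, Matrix.mulVec_zero]
    rw [mulVec_sumv] at h2
    have h3 : ∑ i, E j *ᵥ (g i • w i) = g j • w j := by
      rw [Finset.sum_eq_single j]
      · rw [Matrix.mulVec_smul, orth j j, if_pos rfl]
      · intro i _ hij
        rw [Matrix.mulVec_smul, orth i j, if_neg (Ne.symm hij), smul_zero]
      · simp
    rw [h3] at h2
    exact (smul_eq_zero.mp h2).resolve_right (hv j)
  let b : Module.Basis (Fin (d+1)) K (Fin (d+1) → K) :=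
    basisOfLinearIndependentOfCardEqFinrank li (by simp)
  have hb : ⇑b = w := coe_basisOfLinearIndependentOfCardEqFinrank li _
  have orth' : ∀ i j, E j *ᵥ b i = if j = i then b i else 0 := by
    intro i j
    simp only [hb]
    exact orth i j
  refine ⟨b, orth', ?_⟩
  intro j x
  refine ⟨b.repr x j, ?_⟩
  conv_lhs => rw [← b.sum_repr x]
  rw [mulVec_sumv, Finset.sum_eq_single j]
  · rw [Matrix.mulVec_smul, orth' j j, if_pos rfl]
  · intro i _ hij
    rw [Matrix.mulVec_smul, orth' i j, if_neg (Ne.symm hij), smul_zero]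
  · simp

private lemma E_zero_mulVec_ne (L : LeonardSystem K d)
    (bE : Module.Basis (Fin (d+1)) K (Fin (d+1) → K))
    (prjE : ∀ j x, ∃ lam : K, L.E j *ᵥ x = lam • bE j)
    (i : Fin (d+1)) (w : Fin (d+1) → K) (hw : L.Es i *ᵥ w = w) (hw0 : w ≠ 0)
    (h0 : L.E 0 *ᵥ w = 0) : False := by
  have hAs : L.As *ᵥ w = L.θs i • w := by
    have h1 : L.As * L.Es i = L.θs i • L.Es i := by
      rw [L.As_eq]; exact sum_smul_mul_idem L.Es L.θs L.Es_mul i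
    calc L.As *ᵥ w = L.As *ᵥ (L.Es i *ᵥ w) := by rw [hw]
    _ = (L.As * L.Es i) *ᵥ w := Matrix.mulVec_mulVec _ _ _
    _ = L.θs i • (L.Es i *ᵥ w) := by rw [h1, Matrix.smul_mulVec]
    _ = L.θs i • w := by rw [hw]
  have main : ∀ k : ℕ, ∀ m : Fin (d+1), (m : ℕ) ≤ k → L.E m *ᵥ w = 0 := by
    intro k
    induction k with
    | zero =>
      intro m hm
      have hm0 : m = 0 := by
        apply Fin.ext
        simpa using Nat.le_zero.mp hm
      rw [hm0]; exact h0
    | succ k ih =>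
      intro m hm
      rcases Nat.lt_or_ge (m : ℕ) (k+1) with h | h
      · exact ih m (Nat.lt_succ_iff.mp h)
      have hmk : (m : ℕ) = k + 1 := le_antisymm hm h
      have hkd : k < d + 1 := by have := m.isLt; omega
      set j : Fin (d+1) := ⟨k, hkd⟩ with hj
      have hjm : (j : ℕ) + 1 = (m : ℕ) := by simp [hj, hmk]
      have hz : L.E j *ᵥ (L.As *ᵥ w) = 0 := by
        rw [hAs, Matrix.mulVec_smul, ih j (by simp [hj]), smul_zero]
      have hw1 : w = ∑ m', L.E m' *ᵥ w := by
        calc w = (1 : Matrix (Fin (d+1)) (Fin (d+1)) K) *ᵥ w := (Matrix.one_mulVec w).symm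
        _ = (∑ m', L.E m') *ᵥ w := by rw [L.E_sum]
        _ = ∑ m', L.E m' *ᵥ w := sum_mulVecv _ _ _
      have hexp : L.E j *ᵥ (L.As *ᵥ w) = ∑ m', (L.E j * L.As) *ᵥ (L.E m' *ᵥ w) := by
        calc L.E j *ᵥ (L.As *ᵥ w) = (L.E j * L.As) *ᵥ w := Matrix.mulVec_mulVec _ _ _
        _ = (L.E j * L.As) *ᵥ (∑ m', L.E m' *ᵥ w) := by rw [← hw1]
        _ = ∑ m', (L.E j * L.As) *ᵥ (L.E m' *ᵥ w) := mulVec_sumv _ _ _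
      have hterm : ∀ m' : Fin (d+1), m' ≠ m → (L.E j * L.As) *ᵥ (L.E m' *ᵥ w) = 0 := by
        intro m' hm'
        rcases Nat.lt_or_ge (m' : ℕ) (k+1) with h1 | h1
        · rw [ih m' (Nat.lt_succ_iff.mp h1), Matrix.mulVec_zero]
        · have hne2 : (m' : ℕ) ≠ k + 1 := fun hh => hm' (Fin.ext (hh.trans hmk.symm))
          have h2 : (j : ℕ) + 1 < (m' : ℕ) := by
            have : (j : ℕ) = k := rfl
            omega
          rw [Matrix.mulVec_mulVec, L.EAsE_zero j m' (Or.inl h2), Matrix.zero_mulVec]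
      have hjm0 : (L.E j * L.As) *ᵥ (L.E m *ᵥ w) = 0 := by
        rw [hexp] at hz
        rwa [Finset.sum_eq_single m (fun m' _ hm' => hterm m' hm') (by simp)] at hz
      by_contra hx
      obtain ⟨μ, hμ⟩ := prjE m w
      have hμ0 : μ ≠ 0 := fun hh => hx (by rw [hμ, hh, zero_smul])
      have hbE : (L.E j * L.As) *ᵥ (bE m) = 0 := by
        have h4 : (L.E j * L.As) *ᵥ (μ • bE m) = 0 := by rw [← hμ]; exact hjm0
        rw [Matrix.mulVec_smul] at h4
        exact (smul_eq_zero.mp h4).resolve_left hμ0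
      obtain ⟨y, hy⟩ := exists_mulVec_ne (L.EAsE_ne j m (Or.inl hjm))
      apply hy
      obtain ⟨lam, hlam⟩ := prjE m y
      calc (L.E j * L.As * L.E m) *ᵥ y = (L.E j * L.As) *ᵥ (L.E m *ᵥ y) :=
            (Matrix.mulVec_mulVec _ _ _).symm
      _ = (L.E j * L.As) *ᵥ (lam • bE m) := by rw [hlam]
      _ = lam • ((L.E j * L.As) *ᵥ bE m) := Matrix.mulVec_smul _ _ _
      _ = 0 := by rw [hbE, smul_zero]
  apply hw0
  rw [show w = ∑ m', L.E m' *ᵥ w by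
    calc w = (1 : Matrix (Fin (d+1)) (Fin (d+1)) K) *ᵥ w := (Matrix.one_mulVec w).symm
    _ = (∑ m', L.E m') *ᵥ w := by rw [L.E_sum]
    _ = ∑ m', L.E m' *ᵥ w := sum_mulVecv _ _ _]
  refine Finset.sum_eq_zero fun m _ => main d m (Nat.lt_succ_iff.mp m.isLt)

private def deltaSeq (T : Matrix (Fin (d+1)) (Fin (d+1)) K) : ℕ → K
  | 0 => 1
  | (k+1) => deltaSeq T k * mentry T k (k+1) * (mentry T (k+1) k)⁻¹

private lemma mentry_coe (T : Matrix (Fin (d+1)) (Fin (d+1)) K) (p q : Fin (d+1)) :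
    mentry T (p : ℕ) (q : ℕ) = T p q := by
  simp [mentry, p.isLt, q.isLt]

private lemma key_s14 (L : LeonardSystem K d) (u : Fin (d+1) → K)
    (hu : L.E 0 *ᵥ u = u) (hu0 : u ≠ 0) : ∀ i, L.Es i *ᵥ u ≠ 0 := by
  obtain ⟨bE, orthE, prjE⟩ := exists_adapted_basis L.E L.E_mul L.E_ne
  obtain ⟨bS, orthS, prjS⟩ := exists_adapted_basis L.Es L.Es_mul L.Es_ne
  set c : Fin (d+1) → K := fun k => bS.repr u k with hcdef
  have hc : ∑ k, c k • bS k = u := bS.sum_repr u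
  have hcne0 : c ≠ 0 := by
    intro h
    apply hu0
    rw [← hc, h]
    simp
  have hEsu : ∀ k, L.Es k *ᵥ u = c k • bS k := by
    intro k
    conv_lhs => rw [← hc]
    rw [mulVec_sumv, Finset.sum_eq_single k]
    · rw [Matrix.mulVec_smul, orthS k k, if_pos rfl]
    · intro i _ hik
      rw [Matrix.mulVec_smul, orthS i k, if_neg (Ne.symm hik), smul_zero]
    · simp
  suffices hcne : ∀ k, c k ≠ 0 by
    intro i
    rw [hEsu i]
    exact smul_ne_zero (hcne i) (bS.ne_zero i)
  set T : Matrix (Fin (d+1)) (Fin (d+1)) K :=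
    Matrix.of (fun p q => bS.repr (L.A *ᵥ bS q) p) with hTdef
  have hT : ∀ q, L.A *ᵥ bS q = ∑ p, T p q • bS p := fun q => (bS.sum_repr _).symm
  have hApq : ∀ p q, L.Es p *ᵥ (L.A *ᵥ bS q) = T p q • bS p := by
    intro p q
    rw [hT q, mulVec_sumv, Finset.sum_eq_single p]
    · rw [Matrix.mulVec_smul, orthS p p, if_pos rfl]
    · intro i _ hip
      rw [Matrix.mulVec_smul, orthS i p, if_neg (Ne.symm hip), smul_zero]
    · simp
  have tri0 : ∀ p q : Fin (d+1), ((p:ℕ)+1 < q ∨ (q:ℕ)+1 < p) → T p q = 0 := by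
    intro p q hpq
    have h1 : (L.Es p * L.A * L.Es q) *ᵥ bS q = 0 := by
      rw [L.EsAEs_zero p q hpq, Matrix.zero_mulVec]
    have h2 : (L.Es p * L.A * L.Es q) *ᵥ bS q = T p q • bS p := by
      calc (L.Es p * L.A * L.Es q) *ᵥ bS q
          = (L.Es p * L.A) *ᵥ (L.Es q *ᵥ bS q) := (Matrix.mulVec_mulVec _ _ _).symm
      _ = (L.Es p * L.A) *ᵥ bS q := by rw [orthS q q, if_pos rfl]
      _ = L.Es p *ᵥ (L.A *ᵥ bS q) := (Matrix.mulVec_mulVec _ _ _).symm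
      _ = T p q • bS p := hApq p q
    rw [h2] at h1
    exact (smul_eq_zero.mp h1).resolve_right (bS.ne_zero p)
  have tri1 : ∀ p q : Fin (d+1), ((p:ℕ)+1 = q ∨ (q:ℕ)+1 = p) → T p q ≠ 0 := by
    intro p q hpq hT0
    obtain ⟨y, hy⟩ := exists_mulVec_ne (L.EsAEs_ne p q hpq)
    obtain ⟨lam, hlam⟩ := prjS q y
    apply hy
    calc (L.Es p * L.A * L.Es q) *ᵥ y
        = (L.Es p * L.A) *ᵥ (L.Es q *ᵥ y) := (Matrix.mulVec_mulVec _ _ _).symm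
    _ = (L.Es p * L.A) *ᵥ (lam • bS q) := by rw [hlam]
    _ = lam • ((L.Es p * L.A) *ᵥ bS q) := Matrix.mulVec_smul _ _ _
    _ = lam • (L.Es p *ᵥ (L.A *ᵥ bS q)) := by rw [Matrix.mulVec_mulVec]
    _ = lam • (T p q • bS p) := by rw [hApq]
    _ = 0 := by rw [hT0, zero_smul, smul_zero]
  have hAexp : ∀ x : Fin (d+1) → K,
      L.A *ᵥ (∑ q, x q • bS q) = ∑ p, (∑ q, T p q * x q) • bS p := by
    intro x
    rw [mulVec_sumv]
    have h1 : ∀ q ∈ Finset.univ, L.A *ᵥ (x q • bS q) = ∑ p, (T p q * x q) • bS p := by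
      intro q _
      rw [Matrix.mulVec_smul, hT q, Finset.smul_sum]
      refine Finset.sum_congr rfl fun p _ => ?_
      rw [smul_smul, mul_comm]
    rw [Finset.sum_congr rfl h1, Finset.sum_comm]
    refine Finset.sum_congr rfl fun p _ => ?_
    rw [Finset.sum_smul]
  have hAu : L.A *ᵥ u = L.θ 0 • u := by
    have h1 : L.A * L.E 0 = L.θ 0 • L.E 0 := by
      rw [L.A_eq]; exact sum_smul_mul_idem L.E L.θ L.E_mul 0
    calc L.A *ᵥ u = L.A *ᵥ (L.E 0 *ᵥ u) := by rw [hu]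
    _ = (L.A * L.E 0) *ᵥ u := Matrix.mulVec_mulVec _ _ _
    _ = L.θ 0 • (L.E 0 *ᵥ u) := by rw [h1, Matrix.smul_mulVec]
    _ = L.θ 0 • u := by rw [hu]
  have eigc : ∀ p, ∑ q, T p q * c q = L.θ 0 * c p := by
    have h1 : L.A *ᵥ u = ∑ p, (∑ q, T p q * c q) • bS p := by
      calc L.A *ᵥ u = L.A *ᵥ (∑ q, c q • bS q) := by rw [hc]
      _ = ∑ p, (∑ q, T p q * c q) • bS p := hAexp c
    have h2 : L.A *ᵥ u = ∑ p, (L.θ 0 * c p) • bS p := by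
      rw [hAu]
      calc L.θ 0 • u = L.θ 0 • ∑ p, c p • bS p := by rw [hc]
      _ = ∑ p, (L.θ 0 * c p) • bS p := by
          rw [Finset.smul_sum]
          exact Finset.sum_congr rfl fun p _ => smul_smul _ _ _
    have h3 := coords_unique bS _ _ (h1.symm.trans h2)
    exact fun p => congrFun h3 p
  obtain ⟨μ, hμ⟩ := prjE 0 u
  rw [hu] at hμ
  have hμ0 : μ ≠ 0 := fun h => hu0 (by rw [hμ, h, zero_smul])
  have hγex : ∀ q, ∃ g : K, L.E 0 *ᵥ bS q = g • u := by
    intro q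
    obtain ⟨lam, hlam⟩ := prjE 0 (bS q)
    refine ⟨lam * μ⁻¹, ?_⟩
    rw [hlam, hμ, smul_smul, mul_assoc, inv_mul_cancel₀ hμ0, mul_one]
  choose γ hγ using hγex
  have hγ0 : ∀ q, γ q ≠ 0 := by
    intro q h
    have hEq : L.E 0 *ᵥ bS q = 0 := by rw [hγ q, h, zero_smul]
    exact E_zero_mulVec_ne L bE prjE q (bS q)
      (by rw [orthS q q, if_pos rfl]) (bS.ne_zero q) hEq
  have E0A : L.E 0 * L.A = L.θ 0 • L.E 0 := by
    rw [L.A_eq]; exact mul_idem_sum_smul L.E L.θ L.E_mul 0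
  have leftγ : ∀ q, ∑ p, γ p * T p q = L.θ 0 * γ q := by
    intro q
    have h1 : L.E 0 *ᵥ (L.A *ᵥ bS q) = (L.θ 0 * γ q) • u := by
      calc L.E 0 *ᵥ (L.A *ᵥ bS q) = (L.E 0 * L.A) *ᵥ bS q := Matrix.mulVec_mulVec _ _ _
      _ = L.θ 0 • (L.E 0 *ᵥ bS q) := by rw [E0A, Matrix.smul_mulVec]
      _ = (L.θ 0 * γ q) • u := by rw [hγ q, smul_smul]
    have h2 : L.E 0 *ᵥ (L.A *ᵥ bS q) = (∑ p, γ p * T p q) • u := by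
      rw [hT q, mulVec_sumv, Finset.sum_smul]
      refine Finset.sum_congr rfl fun p _ => ?_
      rw [Matrix.mulVec_smul, hγ p, smul_smul, mul_comm]
    exact smul_cancel hu0 (h2.symm.trans h1)
  have δne : ∀ k, k < d + 1 → deltaSeq T k ≠ 0 := by
    intro k
    induction k with
    | zero => intro _; simp [deltaSeq]
    | succ k ih =>
      intro hk
      have hk' : k < d + 1 := Nat.lt_of_succ_lt hk
      have e1 : mentry T k (k+1) = T ⟨k, hk'⟩ ⟨k+1, hk⟩ := by simp [mentry, hk', hk]
      have e2 : mentry T (k+1) k = T ⟨k+1, hk⟩ ⟨k, hk'⟩ := by simp [mentry, hk', hk]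
      have t1 : T ⟨k, hk'⟩ ⟨k+1, hk⟩ ≠ 0 := tri1 _ _ (Or.inl rfl)
      have t2 : T ⟨k+1, hk⟩ ⟨k, hk'⟩ ≠ 0 := tri1 _ _ (Or.inr rfl)
      show deltaSeq T k * mentry T k (k+1) * (mentry T (k+1) k)⁻¹ ≠ 0
      exact mul_ne_zero (mul_ne_zero (ih hk') (by rw [e1]; exact t1))
        (inv_ne_zero (by rw [e2]; exact t2))
  have symaux : ∀ p q : Fin (d+1), (p : ℕ) < (q : ℕ) →
      deltaSeq T (p : ℕ) * T p q = deltaSeq T (q : ℕ) * T q p := by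
    intro p q hlt
    rcases Nat.lt_or_ge ((p:ℕ)+1) (q:ℕ) with h1 | h1
    · rw [tri0 p q (Or.inl h1), tri0 q p (Or.inr h1), mul_zero, mul_zero]
    · have h2 : (p:ℕ)+1 = (q:ℕ) := le_antisymm (Nat.succ_le_of_lt hlt) h1
      have hδq : deltaSeq T (q : ℕ) = deltaSeq T (p : ℕ) * T p q * (T q p)⁻¹ := by
        rw [← h2]
        show deltaSeq T (p:ℕ) * mentry T (p:ℕ) ((p:ℕ)+1) * (mentry T ((p:ℕ)+1) (p:ℕ))⁻¹ = _
        rw [h2, mentry_coe, mentry_coe]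
      rw [hδq, mul_assoc, inv_mul_cancel₀ (tri1 q p (Or.inr h2)), mul_one]
  have sym : ∀ p q : Fin (d+1), deltaSeq T (p : ℕ) * T p q = deltaSeq T (q : ℕ) * T q p := by
    intro p q
    rcases Nat.lt_trichotomy (p:ℕ) (q:ℕ) with h | h | h
    · exact symaux p q h
    · rw [Fin.ext h]
    · exact (symaux q p h).symm
  have leftl : ∀ q : Fin (d+1), ∑ p : Fin (d+1), (deltaSeq T (p:ℕ) * c p) * T p q
      = L.θ 0 * (deltaSeq T (q:ℕ) * c q) := by
    intro q
    calc ∑ p : Fin (d+1), (deltaSeq T (p:ℕ) * c p) * T p q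
        = ∑ p : Fin (d+1), c p * (deltaSeq T (p:ℕ) * T p q) :=
          Finset.sum_congr rfl fun p _ => by ring
    _ = ∑ p : Fin (d+1), c p * (deltaSeq T (q:ℕ) * T q p) :=
          Finset.sum_congr rfl fun p _ => by rw [sym p q]
    _ = deltaSeq T (q:ℕ) * ∑ p : Fin (d+1), T q p * c p := by
        rw [Finset.mul_sum]
        exact Finset.sum_congr rfl fun p _ => by ring
    _ = deltaSeq T (q:ℕ) * (L.θ 0 * c q) := by rw [eigc q]
    _ = L.θ 0 * (deltaSeq T (q:ℕ) * c q) := by ring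
  set N : Matrix (Fin (d+1)) (Fin (d+1)) K := Tᵀ - L.θ 0 • 1 with hN
  have memker : ∀ x : Fin (d+1) → K, (∀ q, ∑ p, x p * T p q = L.θ 0 * x q) →
      x ∈ LinearMap.ker N.mulVecLin := by
    intro x hx
    rw [LinearMap.mem_ker, Matrix.mulVecLin_apply]
    rw [hN, Matrix.sub_mulVec, Matrix.smul_mulVec, Matrix.one_mulVec]
    ext q
    have h1 : ∑ p, T p q * x p = L.θ 0 * x q := by
      rw [← hx q]
      exact Finset.sum_congr rfl fun p _ => mul_comm _ _
    simp only [Pi.sub_apply, Pi.smul_apply, Pi.zero_apply, smul_eq_mul]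
    rw [show (Tᵀ *ᵥ x) q = ∑ p, T p q * x p from rfl] at *
    rw [h1, sub_self]
  have hγker : γ ∈ LinearMap.ker N.mulVecLin := memker γ leftγ
  have hlker : (fun p : Fin (d+1) => deltaSeq T (p:ℕ) * c p) ∈ LinearMap.ker N.mulVecLin :=
    memker _ leftl
  have kerT : ∀ x : Fin (d+1) → K, (T - L.θ 0 • 1) *ᵥ x = 0 → ∃ lam : K, x = lam • c := by
    intro x hx
    have hTx : T *ᵥ x = L.θ 0 • x := by
      rw [Matrix.sub_mulVec, Matrix.smul_mulVec, Matrix.one_mulVec] at hx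
      exact sub_eq_zero.mp hx
    have hTx' : ∀ p, ∑ q, T p q * x q = L.θ 0 * x p := by
      intro p
      have := congrFun hTx p
      rw [show (T *ᵥ x) p = ∑ q, T p q * x q from rfl] at this
      simpa using this
    set v : Fin (d+1) → K := ∑ q, x q • bS q with hv
    have hAv : L.A *ᵥ v = L.θ 0 • v := by
      rw [hv, hAexp x]
      calc ∑ p, (∑ q, T p q * x q) • bS p = ∑ p, (L.θ 0 * x p) • bS p :=
            Finset.sum_congr rfl fun p _ => by rw [hTx' p]
      _ = L.θ 0 • ∑ p, x p • bS p := by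
          rw [Finset.smul_sum]
          exact Finset.sum_congr rfl fun p _ => (smul_smul _ _ _).symm
    have hEm : ∀ m : Fin (d+1), m ≠ 0 → L.E m *ᵥ v = 0 := by
      intro m hm
      have h1 : L.E m * L.A = L.θ m • L.E m := by
        rw [L.A_eq]; exact mul_idem_sum_smul L.E L.θ L.E_mul m
      have h2 : L.θ m • (L.E m *ᵥ v) = L.θ 0 • (L.E m *ᵥ v) := by
        calc L.θ m • (L.E m *ᵥ v) = (L.θ m • L.E m) *ᵥ v := (Matrix.smul_mulVec _ _ _).symm
        _ = (L.E m * L.A) *ᵥ v := by rw [h1]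
        _ = L.E m *ᵥ (L.A *ᵥ v) := (Matrix.mulVec_mulVec _ _ _).symm
        _ = L.E m *ᵥ (L.θ 0 • v) := by rw [hAv]
        _ = L.θ 0 • (L.E m *ᵥ v) := Matrix.mulVec_smul _ _ _
      have h3 : (L.θ m - L.θ 0) • (L.E m *ᵥ v) = 0 := by rw [sub_smul, h2, sub_self]
      rcases smul_eq_zero.mp h3 with h4 | h4
      · exact absurd (L.θ_inj (sub_eq_zero.mp h4)) hm
      · exact h4
    have hv0 : v = L.E 0 *ᵥ v := by
      calc v = (1 : Matrix (Fin (d+1)) (Fin (d+1)) K) *ᵥ v := (Matrix.one_mulVec v).symm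
      _ = (∑ m, L.E m) *ᵥ v := by rw [L.E_sum]
      _ = ∑ m, L.E m *ᵥ v := sum_mulVecv _ _ _
      _ = L.E 0 *ᵥ v := Finset.sum_eq_single 0 (fun m _ hm => hEm m hm) (by simp)
    obtain ⟨a, ha⟩ := prjE 0 v
    have hva : v = (a * μ⁻¹) • u := by
      rw [hv0, ha, hμ, smul_smul, mul_assoc, inv_mul_cancel₀ hμ0, mul_one]
    refine ⟨a * μ⁻¹, ?_⟩
    have h5 : ∑ q, x q • bS q = ∑ q, ((a * μ⁻¹) * c q) • bS q := by
      calc ∑ q, x q • bS q = v := hv.symm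
      _ = (a * μ⁻¹) • u := hva
      _ = (a * μ⁻¹) • ∑ q, c q • bS q := by rw [hc]
      _ = ∑ q, ((a * μ⁻¹) * c q) • bS q := by
          rw [Finset.smul_sum]
          exact Finset.sum_congr rfl fun q _ => smul_smul _ _ _
    have h6 := coords_unique bS _ _ h5
    funext q
    rw [congrFun h6 q]
    rfl
  have hker_le : LinearMap.ker (T - L.θ 0 • 1).mulVecLin ≤ Submodule.span K {c} := by
    intro x hx
    rw [LinearMap.mem_ker, Matrix.mulVecLin_apply] at hx
    obtain ⟨lam, hlam⟩ := kerT x hx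
    rw [Submodule.mem_span_singleton]
    exact ⟨lam, hlam.symm⟩
  have hfr1 : Module.finrank K (LinearMap.ker (T - L.θ 0 • 1).mulVecLin) ≤ 1 := by
    calc Module.finrank K (LinearMap.ker (T - L.θ 0 • 1).mulVecLin)
        ≤ Module.finrank K (Submodule.span K {c}) := Submodule.finrank_mono hker_le
    _ = 1 := finrank_span_singleton hcne0
  have hfrN : Module.finrank K (LinearMap.ker N.mulVecLin) ≤ 1 := by
    have htrans : N = (T - L.θ 0 • 1)ᵀ := by
      rw [hN, Matrix.transpose_sub, Matrix.transpose_smul, Matrix.transpose_one]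
    have hrk : N.rank = (T - L.θ 0 • 1).rank := by
      rw [htrans]; exact Matrix.rank_transpose _
    have e1 := LinearMap.finrank_range_add_finrank_ker N.mulVecLin
    have e2 := LinearMap.finrank_range_add_finrank_ker (T - L.θ 0 • 1).mulVecLin
    have e3 : Module.finrank K (LinearMap.range N.mulVecLin) =
        Module.finrank K (LinearMap.range (T - L.θ 0 • 1).mulVecLin) := hrk
    omega
  have hγfun0 : γ ≠ 0 := fun h => hγ0 0 (congrFun h 0)
  have hspan_eq : Submodule.span K {γ} = LinearMap.ker N.mulVecLin := by
    apply Submodule.eq_of_le_of_finrank_le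
    · rw [Submodule.span_singleton_le_iff_mem]; exact hγker
    · rw [finrank_span_singleton hγfun0]; exact hfrN
  have hlmem : (fun p : Fin (d+1) => deltaSeq T (p:ℕ) * c p) ∈ Submodule.span K {γ} := by
    rw [hspan_eq]; exact hlker
  obtain ⟨lam, hlam⟩ := Submodule.mem_span_singleton.mp hlmem
  have hlam0 : lam ≠ 0 := by
    obtain ⟨k, hk⟩ : ∃ k, c k ≠ 0 := by
      by_contra hcc; push_neg at hcc; exact hcne0 (funext hcc)
    intro h
    have h7 := congrFun hlam k
    rw [h, zero_smul] at h7
    have h7' : deltaSeq T (k:ℕ) * c k = 0 := by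
      have := h7.symm
      simpa using this
    exact mul_ne_zero (δne k k.isLt) hk h7'
  intro k
  have h8 : lam * γ k = deltaSeq T (k:ℕ) * c k := congrFun hlam k
  intro h
  rw [h, mul_zero] at h8
  exact mul_ne_zero hlam0 (hγ0 k) h8

end Stmt14Aux

theorem stmt14 {K : Type*} [Field K] {d : ℕ} (L : LeonardSystem K d)
    (u : Fin (d+1) → K) (hu : L.E 0 *ᵥ u = u) (hu0 : u ≠ 0) :
    (∀ i : Fin (d+1), L.Es i *ᵥ u ≠ 0) ∧
    LinearIndependent K (fun i : Fin (d+1) => L.Es i *ᵥ u) ∧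
    Submodule.span K (Set.range (fun i : Fin (d+1) => L.Es i *ᵥ u)) = ⊤ ∧
    (∀ v : Fin (d+1) → (Fin (d+1) → K), (∃ i, v i ≠ 0) →
      ((∃ u' : Fin (d+1) → K, L.E 0 *ᵥ u' = u' ∧ u' ≠ 0 ∧ ∀ i, v i = L.Es i *ᵥ u') ↔
        ((∀ i, L.Es i *ᵥ (v i) = v i) ∧ L.E 0 *ᵥ (∑ i, v i) = ∑ i, v i))) := by
  have hne := key_s14 L u hu hu0
  have li : LinearIndependent K (fun i : Fin (d+1) => L.Es i *ᵥ u) := by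
    rw [Fintype.linearIndependent_iff]
    intro g hg j
    have h2 : L.Es j *ᵥ (∑ i, g i • (L.Es i *ᵥ u)) = 0 := by rw [hg, Matrix.mulVec_zero]
    rw [mulVec_sumv] at h2
    have h3 : ∑ i, L.Es j *ᵥ (g i • (L.Es i *ᵥ u)) = g j • (L.Es j *ᵥ u) := by
      rw [Finset.sum_eq_single j]
      · rw [Matrix.mulVec_smul, Matrix.mulVec_mulVec, L.Es_mul j j, if_pos rfl]
      · intro i _ hij
        rw [Matrix.mulVec_smul, Matrix.mulVec_mulVec, L.Es_mul j i, if_neg (Ne.symm hij),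
          Matrix.zero_mulVec, smul_zero]
      · simp
    rw [h3] at h2
    exact (smul_eq_zero.mp h2).resolve_right (hne j)
  refine ⟨hne, li, ?_, ?_⟩
  · let b := basisOfLinearIndependentOfCardEqFinrank li (by simp)
    have hb : ⇑b = fun i : Fin (d+1) => L.Es i *ᵥ u :=
      coe_basisOfLinearIndependentOfCardEqFinrank li _
    rw [← hb]
    exact b.span_eq
  · intro v hv
    constructor
    · rintro ⟨u', hu', hu'0, hv'⟩
      constructor
      · intro i
        rw [hv' i, Matrix.mulVec_mulVec, L.Es_mul i i, if_pos rfl]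
      · have hsum : ∑ i, v i = u' := by
          rw [Finset.sum_congr rfl (fun i _ => hv' i), ← sum_mulVecv, L.Es_sum,
            Matrix.one_mulVec]
        rw [hsum]
        exact hu'
    · rintro ⟨h1, h2⟩
      have hvi : ∀ i, L.Es i *ᵥ (∑ j, v j) = v i := by
        intro i
        rw [mulVec_sumv, Finset.sum_eq_single i]
        · exact h1 i
        · intro j _ hji
          rw [← h1 j, Matrix.mulVec_mulVec, L.Es_mul i j, if_neg (fun hh => hji hh.symm),
            Matrix.zero_mulVec]
        · simp
      refine ⟨∑ i, v i, h2, ?_, fun i => (hvi i).symm⟩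
      intro h0
      obtain ⟨i, hi⟩ := hv
      apply hi
      rw [← hvi i, h0, Matrix.mulVec_zero]
end

section
/- Let Φ be a Leonard system and let B be the matrix representing A with respect to a Φ-standard basis, with entries b_i = B_{i,i+1}, a_i = B_{ii}, c_i = B_{i,i−1}. Then: (i) b_{i−1} c_i = x_i for 1 ≤ i ≤ d, where x_i = tr(E*_i A E*_{i−1} A); (ii) c_i + a_i + b_i = θ_0 for 0 ≤ i ≤ d (with b_d = 0, c_0 = 0), where θ_0 is the eigenvalue of A for E_0; (iii) b_0 b_1 ⋯ b_{i−1} = p_i(θ_0) for 0 ≤ i ≤ d, where the p_i are the monic three-term-recurrence polynomials of Φ; in particular p_i(θ_0) ≠ 0 for 0 ≤ i ≤ d. -/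
open Matrix Polynomial

namespace Stmt16Aux

open Module Submodule

variable {K : Type*} [Field K]

lemma sum_mulVec {ι : Type*} {m n : ℕ} (s : Finset ι) (M : ι → Matrix (Fin m) (Fin n) K)
    (y : Fin n → K) : (∑ i ∈ s, M i) *ᵥ y = ∑ i ∈ s, M i *ᵥ y := by
  classical
  induction s using Finset.induction_on with
  | empty => simp
  | insert _ _ h ih => rw [Finset.sum_insert h, Finset.sum_insert h, Matrix.add_mulVec, ih]

lemma eq_zero_of_forall_mulVec {m n : ℕ} {M : Matrix (Fin m) (Fin n) K}
    (h : ∀ y, M *ᵥ y = 0) : M = 0 := by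
  ext i j
  have := congrFun (h (Pi.single j 1)) i
  simpa using this

lemma eq_of_forall_mulVec {m n : ℕ} {M N : Matrix (Fin m) (Fin n) K}
    (h : ∀ y, M *ᵥ y = N *ᵥ y) : M = N := by
  have := eq_zero_of_forall_mulVec (M := M - N)
    (fun y => by rw [Matrix.sub_mulVec, h, sub_self])
  exact sub_eq_zero.mp this

lemma exists_mulVec_ne_zero {m n : ℕ} {M : Matrix (Fin m) (Fin n) K} (h : M ≠ 0) :
    ∃ y, M *ᵥ y ≠ 0 := by
  by_contra hc
  push_neg at hc
  exact h (eq_zero_of_forall_mulVec hc)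

lemma finrank_range_eq_one {m : ℕ} (E : Fin m → Matrix (Fin m) (Fin m) K)
    (hne : ∀ i, E i ≠ 0)
    (hmul : ∀ i j, E i * E j = if i = j then E i else 0)
    (hsum : ∑ i, E i = 1) (i : Fin m) :
    finrank K (LinearMap.range (E i).mulVecLin) = 1 := by
  classical
  set R : Fin m → Submodule K (Fin m → K) := fun j => LinearMap.range (E j).mulVecLin with hR
  let f : (Fin m → K) →ₗ[K] (∀ j, R j) := LinearMap.pi fun j => (E j).mulVecLin.rangeRestrict
  let g : (∀ j, R j) →ₗ[K] (Fin m → K) := ∑ j, (R j).subtype ∘ₗ LinearMap.proj j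
  have hgf : ∀ x, g (f x) = x := by
    intro x
    show (∑ j, (R j).subtype ∘ₗ LinearMap.proj j) (f x) = x
    rw [LinearMap.sum_apply]
    have h1 : ∀ j : Fin m, ((R j).subtype ∘ₗ LinearMap.proj j) (f x) = E j *ᵥ x := fun j => rfl
    rw [Finset.sum_congr rfl fun j _ => h1 j, ← sum_mulVec, hsum, Matrix.one_mulVec]
  have hfg : ∀ c, f (g c) = c := by
    intro c
    funext j
    apply Subtype.ext
    have hgc : g c = ∑ k, ((c k : Fin m → K)) := by
      show (∑ k, (R k).subtype ∘ₗ LinearMap.proj k) c = _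
      rw [LinearMap.sum_apply]
      rfl
    show E j *ᵥ (g c) = (c j : Fin m → K)
    rw [hgc, show E j *ᵥ (∑ k, ((c k : Fin m → K))) = ∑ k, E j *ᵥ (c k : Fin m → K) from
      map_sum (E j).mulVecLin _ _]
    rw [Finset.sum_eq_single j]
    · obtain ⟨y, hy⟩ := (c j).2
      rw [← hy]
      show E j *ᵥ (E j *ᵥ y) = E j *ᵥ y
      rw [Matrix.mulVec_mulVec, hmul, if_pos rfl]
    · intro k _ hk
      obtain ⟨y, hy⟩ := (c k).2
      rw [← hy]
      show E j *ᵥ (E k *ᵥ y) = 0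
      rw [Matrix.mulVec_mulVec, hmul, if_neg hk.symm, Matrix.zero_mulVec]
    · intro h; exact absurd (Finset.mem_univ _) h
  let e : (Fin m → K) ≃ₗ[K] (∀ j, R j) :=
    LinearEquiv.ofLinear f g (LinearMap.ext hfg) (LinearMap.ext hgf)
  have hdim : ∑ j, finrank K (R j) = m := by
    have h2 := e.finrank_eq
    rw [Module.finrank_pi, Module.finrank_pi_fintype] at h2
    simpa using h2.symm
  have hpos : ∀ j, 1 ≤ finrank K (R j) := by
    intro j
    rw [Nat.one_le_iff_ne_zero]
    intro h0
    have hbot : R j = ⊥ := Submodule.finrank_eq_zero.mp h0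
    apply hne j
    apply eq_zero_of_forall_mulVec
    intro y
    have : E j *ᵥ y ∈ R j := ⟨y, rfl⟩
    rw [hbot] at this
    simpa using this
  have hcard : ∑ _j : Fin m, 1 = m := by simp
  have := (Finset.sum_eq_sum_iff_of_le (fun j _ => hpos j)).mp (hcard.trans hdim.symm)
  exact (this i (Finset.mem_univ i)).symm

lemma mulVec_scalar {m : ℕ} {P : Matrix (Fin m) (Fin m) K} {w : Fin m → K}
    (hw : w ∈ LinearMap.range P.mulVecLin) (hw0 : w ≠ 0)
    (hrk : finrank K (LinearMap.range P.mulVecLin) = 1) (y : Fin m → K) :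
    ∃ c : K, P *ᵥ y = c • w := by
  have hspan : LinearMap.range P.mulVecLin = Submodule.span K {w} := by
    refine (eq_of_le_of_finrank_le (Submodule.span_le.mpr (Set.singleton_subset_iff.mpr hw)) ?_).symm
    rw [hrk, finrank_span_singleton hw0]
  have hmem : P *ᵥ y ∈ Submodule.span K {w} := hspan ▸ ⟨y, rfl⟩
  obtain ⟨c, hc⟩ := Submodule.mem_span_singleton.mp hmem
  exact ⟨c, hc.symm⟩

lemma mulVec_ne_zero_of_ne {m : ℕ} {M P : Matrix (Fin m) (Fin m) K} {w : Fin m → K}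
    (hw : w ∈ LinearMap.range P.mulVecLin) (hw0 : w ≠ 0)
    (hrk : finrank K (LinearMap.range P.mulVecLin) = 1) (hMP : M * P ≠ 0) :
    M *ᵥ w ≠ 0 := by
  obtain ⟨y, hy⟩ := exists_mulVec_ne_zero hMP
  obtain ⟨c, hc⟩ := mulVec_scalar hw hw0 hrk y
  intro h0
  apply hy
  rw [← Matrix.mulVec_mulVec, hc, Matrix.mulVec_smul, h0, smul_zero]

lemma trace_eq_one {m : ℕ} {P : Matrix (Fin m) (Fin m) K} {w : Fin m → K}
    (hP : P * P = P) (hw : w ∈ LinearMap.range P.mulVecLin) (hw0 : w ≠ 0)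
    (hrk : finrank K (LinearMap.range P.mulVecLin) = 1) :
    P.trace = 1 := by
  classical
  choose c hc using fun y => mulVec_scalar hw hw0 hrk y
  have hPw : P *ᵥ w = w := by
    obtain ⟨z, hz⟩ := hw
    have hz' : P *ᵥ z = w := hz
    rw [← hz', Matrix.mulVec_mulVec, hP]
  have hentry : ∀ a b, P a b = c (Pi.single b 1) * w a := by
    intro a b
    have := congrFun (hc (Pi.single b 1)) a
    simpa [mul_comm] using this
  have hsum1 : ∑ b, c (Pi.single b 1) * w b = 1 := by
    obtain ⟨aa, ha⟩ := Function.ne_iff.mp hw0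
    have h2 := congrFun hPw aa
    have h3 : (P *ᵥ w) aa = ∑ b, P aa b * w b := rfl
    rw [h3] at h2
    have h4 : ∑ b, P aa b * w b = w aa * ∑ b, c (Pi.single b 1) * w b := by
      rw [Finset.mul_sum]
      refine Finset.sum_congr rfl fun b _ => ?_
      rw [hentry aa b]; ring
    rw [h4] at h2
    exact mul_left_cancel₀ ha (by rw [mul_one]; exact h2)
  have : P.trace = ∑ a, c (Pi.single a 1) * w a := by
    rw [Matrix.trace]
    refine Finset.sum_congr rfl fun a _ => ?_
    rw [Matrix.diag_apply, hentry a a]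
  rw [this, hsum1]

lemma trace_sandwich {m : ℕ} {P C : Matrix (Fin m) (Fin m) K} {w : Fin m → K} {s : K}
    (hP : P * P = P) (hw : w ∈ LinearMap.range P.mulVecLin) (hw0 : w ≠ 0)
    (hrk : finrank K (LinearMap.range P.mulVecLin) = 1)
    (hC : (P * C) *ᵥ w = s • w) :
    (P * C).trace = s := by
  have hPCP : P * C * P = s • P := by
    apply eq_of_forall_mulVec
    intro y
    obtain ⟨cy, hcy⟩ := mulVec_scalar hw hw0 hrk y
    rw [← Matrix.mulVec_mulVec, hcy, Matrix.mulVec_smul, hC, Matrix.smul_mulVec, hcy,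
      smul_smul, smul_smul, mul_comm]
  have h1 : P * C = P * (P * C) := by rw [← Matrix.mul_assoc, hP]
  rw [h1, Matrix.trace_mul_comm, hPCP, Matrix.trace_smul,
    trace_eq_one hP hw hw0 hrk, smul_eq_mul, mul_one]

end Stmt16Aux


/-- The chain of vectors `E_k A* E_{k-1} A* ⋯ E_1 A* u`. -/
def chainVec {K : Type*} [Field K] {d : ℕ} (L : LeonardSystem K d) (u : Fin (d+1) → K) :
    ℕ → (Fin (d+1) → K)
  | 0 => u
  | (k+1) => ((natIdx L.E (k+1)) * L.As) *ᵥ chainVec L u k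

namespace Stmt16Aux

open Module Submodule

variable {K : Type*} [Field K]

lemma Es_ne_zero {d : ℕ} (L : LeonardSystem K d)
    (u : Fin (d+1) → K) (hu : L.E 0 *ᵥ u = u) (hu0 : u ≠ 0) (t : Fin (d+1)) :
    L.Es t *ᵥ u ≠ 0 := by
  classical
  intro hvt
  have hrkE := finrank_range_eq_one L.E L.E_ne L.E_mul L.E_sum
  have hrkEs := finrank_range_eq_one L.Es L.Es_ne L.Es_mul L.Es_sum
  -- the chain vectors are nonzero
  have hchain : ∀ k, k ≤ d →
      chainVec L u k ∈ LinearMap.range ((natIdx L.E k).mulVecLin) ∧ chainVec L u k ≠ 0 := by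
    intro k
    induction k with
    | zero =>
      intro _
      have hnat0 : natIdx L.E 0 = L.E 0 := by
        rw [natIdx, dif_pos (Nat.succ_pos d)]
        simp
      refine ⟨⟨u, ?_⟩, hu0⟩
      show natIdx L.E 0 *ᵥ u = chainVec L u 0
      rw [hnat0]
      exact hu
    | succ k ih =>
      intro hk
      have hk' : k ≤ d := Nat.le_of_succ_le hk
      obtain ⟨hmem, hne⟩ := ih hk'
      have hlt : k + 1 < d + 1 := by omega
      have hltk : k < d + 1 := by omega
      have hnat1 : natIdx L.E (k+1) = L.E ⟨k+1, hlt⟩ := dif_pos hlt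
      have hnatk : natIdx L.E k = L.E ⟨k, hltk⟩ := dif_pos hltk
      constructor
      · show (natIdx L.E (k+1) * L.As) *ᵥ chainVec L u k ∈ _
        rw [hnat1, ← Matrix.mulVec_mulVec]
        exact ⟨_, rfl⟩
      · show (natIdx L.E (k+1) * L.As) *ᵥ chainVec L u k ≠ 0
        apply mulVec_ne_zero_of_ne (P := natIdx L.E k) hmem hne
          (by rw [hnatk]; exact hrkE _)
        rw [hnat1, hnatk, Matrix.mul_assoc, ← Matrix.mul_assoc]
        exact L.EAsE_ne ⟨k+1, hlt⟩ ⟨k, hltk⟩ (Or.inr rfl)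
  -- decomposition of E k * As
  have hdec : ∀ kk : Fin (d+1), L.E kk * L.As = ∑ m, L.E kk * L.As * L.E m := by
    intro kk
    rw [← Finset.mul_sum, L.E_sum, Matrix.mul_one]
  -- support of powers
  have hsupp : ∀ j, j ≤ d → ∀ k : Fin (d+1),
      ((j < (k:ℕ)) → L.E k *ᵥ ((L.As ^ j) *ᵥ u) = 0) ∧
      (((k:ℕ) = j) → L.E k *ᵥ ((L.As ^ j) *ᵥ u) = chainVec L u j) := by
    intro j
    induction j with
    | zero =>
      intro _ k
      have hk0 : L.E k *ᵥ ((L.As ^ 0) *ᵥ u) = (if k = 0 then L.E k else 0) *ᵥ u := by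
        rw [pow_zero, Matrix.one_mulVec]
        conv_lhs => rw [← hu]
        rw [Matrix.mulVec_mulVec, L.E_mul]
      constructor
      · intro hlt
        have hne : k ≠ 0 := by
          intro h
          rw [h] at hlt
          simp at hlt
        rw [hk0, if_neg hne, Matrix.zero_mulVec]
      · intro hkk
        have hke : k = 0 := by
          apply Fin.ext
          simpa using hkk
        rw [hk0, if_pos hke, hke]
        exact hu
    | succ j ihj =>
      intro hj k
      have hj' : j ≤ d := Nat.le_of_succ_le hj
      have ih := ihj hj'
      have hexp : L.E k *ᵥ ((L.As ^ (j+1)) *ᵥ u)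
          = ∑ m, (L.E k * L.As * L.E m) *ᵥ ((L.As ^ j) *ᵥ u) := by
        rw [pow_succ', ← Matrix.mulVec_mulVec, Matrix.mulVec_mulVec, ← sum_mulVec]
        exact congrArg (fun M => M *ᵥ (L.As ^ j *ᵥ u)) (hdec k)
      constructor
      · intro hlt
        rw [hexp]
        apply Finset.sum_eq_zero
        intro m _
        by_cases hm : (m:ℕ) + 1 < (k:ℕ)
        · rw [L.EAsE_zero k m (Or.inr hm), Matrix.zero_mulVec]
        · have hmj : j < (m:ℕ) := by omega
          rw [← Matrix.mulVec_mulVec, (ih m).1 hmj, Matrix.mulVec_zero]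
      · intro hk
        rw [hexp]
        have hjlt : j < d + 1 := by omega
        rw [Finset.sum_eq_single (⟨j, hjlt⟩ : Fin (d+1))]
        · rw [← Matrix.mulVec_mulVec, (ih ⟨j, hjlt⟩).2 rfl]
          have hkk : k = (⟨j+1, by omega⟩ : Fin (d+1)) := Fin.ext hk
          have hnat : natIdx L.E (j+1) = L.E ⟨j+1, by omega⟩ := dif_pos (by omega)
          rw [hkk]
          show _ = (natIdx L.E (j+1) * L.As) *ᵥ chainVec L u j
          rw [hnat]
        · intro m _ hm
          by_cases hm1 : (m:ℕ) + 1 < (k:ℕ)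
          · rw [L.EAsE_zero k m (Or.inr hm1), Matrix.zero_mulVec]
          · have hmne : (m:ℕ) ≠ j := fun h => hm (Fin.ext h)
            have hmj : j < (m:ℕ) := by omega
            rw [← Matrix.mulVec_mulVec, (ih m).1 hmj, Matrix.mulVec_zero]
        · intro h
          exact absurd (Finset.mem_univ _) h
  -- Es t kills all powers applied to u
  have hEsAs : L.Es t * L.As = L.θs t • L.Es t := by
    rw [L.As_eq, Finset.mul_sum]
    have h1 : ∀ i : Fin (d+1), L.Es t * (L.θs i • L.Es i)
        = if t = i then L.θs i • L.Es t else 0 := by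
      intro i
      rw [Matrix.mul_smul, L.Es_mul]
      split <;> simp
    rw [Finset.sum_congr rfl fun i _ => h1 i, Finset.sum_ite_eq]
    simp
  have hEspow : ∀ j : ℕ, L.Es t * L.As ^ j = (L.θs t ^ j) • L.Es t := by
    intro j
    induction j with
    | zero => simp
    | succ j ihp =>
      rw [pow_succ, ← Matrix.mul_assoc, ihp, smul_mul_assoc, hEsAs, smul_smul, ← pow_succ]
  have hkill : ∀ j : ℕ, L.Es t *ᵥ ((L.As ^ j) *ᵥ u) = 0 := by
    intro j
    rw [Matrix.mulVec_mulVec, hEspow, Matrix.smul_mulVec, hvt, smul_zero]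
  -- linear independence of the Krylov family
  have hli : LinearIndependent K (fun j : Fin (d+1) => (L.As ^ (j:ℕ)) *ᵥ u) := by
    rw [Fintype.linearIndependent_iff]
    intro cc hcc
    by_contra hnall
    push_neg at hnall
    obtain ⟨j0, hj0⟩ := hnall
    set T : Finset (Fin (d+1)) := Finset.univ.filter (fun j => cc j ≠ 0) with hT
    have hTne : T.Nonempty := ⟨j0, by simp [hT, hj0]⟩
    set mx := T.max' hTne with hmx
    have hmxT : mx ∈ T := T.max'_mem hTne
    have hcm : cc mx ≠ 0 := by
      have := Finset.mem_filter.mp hmxT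
      exact this.2
    have hdist : L.E mx *ᵥ (∑ j : Fin (d+1), cc j • ((L.As ^ (j:ℕ)) *ᵥ u))
        = ∑ j : Fin (d+1), cc j • (L.E mx *ᵥ ((L.As ^ (j:ℕ)) *ᵥ u)) := by
      rw [show L.E mx *ᵥ (∑ j : Fin (d+1), cc j • ((L.As ^ (j:ℕ)) *ᵥ u))
          = (L.E mx).mulVecLin (∑ j : Fin (d+1), cc j • ((L.As ^ (j:ℕ)) *ᵥ u)) from rfl,
        map_sum]
      refine Finset.sum_congr rfl fun j _ => ?_
      rw [_root_.map_smul]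
      rfl
    have h0 : (0 : Fin (d+1) → K) = cc mx • chainVec L u (mx:ℕ) := by
      have h1 : L.E mx *ᵥ (∑ j : Fin (d+1), cc j • ((L.As ^ (j:ℕ)) *ᵥ u)) = 0 := by
        rw [hcc, Matrix.mulVec_zero]
      rw [hdist] at h1
      rw [← h1, Finset.sum_eq_single mx]
      · rw [(hsupp (mx:ℕ) (Fin.is_le mx) mx).2 rfl]
      · intro j _ hj
        rcases lt_or_gt_of_ne hj with hlt | hgt
        · have : (j:ℕ) < (mx:ℕ) := hlt
          rw [(hsupp (j:ℕ) (Fin.is_le j) mx).1 this, smul_zero]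
        · have hjT : j ∉ T := by
            intro hjT
            exact absurd (Finset.le_max' T j hjT) (not_le.mpr hgt)
          have : cc j = 0 := by
            by_contra hne
            exact hjT (Finset.mem_filter.mpr ⟨Finset.mem_univ j, hne⟩)
          rw [this, zero_smul]
      · intro h
        exact absurd (Finset.mem_univ _) h
    have := (hchain (mx:ℕ) (Fin.is_le mx)).2
    rcases smul_eq_zero.mp h0.symm with h | h
    · exact hcm h
    · exact this h
  -- dimension contradiction
  have hmemker : ∀ j : Fin (d+1), (L.As ^ (j:ℕ)) *ᵥ u ∈ LinearMap.ker (L.Es t).mulVecLin := by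
    intro j
    rw [LinearMap.mem_ker]
    exact hkill (j:ℕ)
  have hspanle : Submodule.span K (Set.range (fun j : Fin (d+1) => (L.As ^ (j:ℕ)) *ᵥ u))
      ≤ LinearMap.ker (L.Es t).mulVecLin := by
    rw [Submodule.span_le]
    rintro _ ⟨j, rfl⟩
    exact hmemker j
  have hks : finrank K (LinearMap.ker (L.Es t).mulVecLin) = d := by
    have h1 := LinearMap.finrank_range_add_finrank_ker (L.Es t).mulVecLin
    rw [hrkEs t, Module.finrank_pi, Fintype.card_fin] at h1
    omega
  have hcard := finrank_span_eq_card hli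
  have hle := Submodule.finrank_mono hspanle
  rw [hcard, hks, Fintype.card_fin] at hle
  omega

end Stmt16Aux
theorem stmt16 {K : Type*} [Field K] {d : ℕ} (L : LeonardSystem K d)
    (u : Fin (d+1) → K) (hu : L.E 0 *ᵥ u = u) (hu0 : u ≠ 0)
    (B : Matrix (Fin (d+1)) (Fin (d+1)) K)
    (hB : ∀ j : Fin (d+1), L.A *ᵥ (L.Es j *ᵥ u) = ∑ i, B i j • (L.Es i *ᵥ u))
    (a x : ℕ → K)
    (ha : ∀ i : Fin (d+1), a (i:ℕ) = Matrix.trace (L.Es i * L.A))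
    (hx0 : x 0 = 0)
    (hx : ∀ i : Fin (d+1), 1 ≤ (i:ℕ) →
      x (i:ℕ) = Matrix.trace (L.Es i * L.A * natIdx L.Es ((i:ℕ) - 1) * L.A))
    (p : ℕ → Polynomial K) (hp0 : p 0 = 1)
    (hrec : ∀ i : ℕ, i ≤ d →
      Polynomial.X * p i = p (i+1) + Polynomial.C (a i) * p i + Polynomial.C (x i) * p (i-1))
    :
    (∀ i : ℕ, 1 ≤ i → i ≤ d → mentry B (i-1) i * mentry B i (i-1) = x i) ∧
    (∀ i : Fin (d+1),
      (if (i:ℕ) = 0 then 0 else mentry B (i:ℕ) ((i:ℕ)-1)) +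
        mentry B (i:ℕ) (i:ℕ) + mentry B (i:ℕ) ((i:ℕ)+1) = L.θ 0) ∧
    (∀ i : Fin (d+1),
      (∏ h ∈ Finset.range (i:ℕ), mentry B h (h+1)) = (p (i:ℕ)).eval (L.θ 0) ∧
      (p (i:ℕ)).eval (L.θ 0) ≠ 0) := by
  classical
  have hrkEs := Stmt16Aux.finrank_range_eq_one L.Es L.Es_ne L.Es_mul L.Es_sum
  have hv0 : ∀ k : Fin (d+1), L.Es k *ᵥ u ≠ 0 := fun k => Stmt16Aux.Es_ne_zero L u hu hu0 k
  have hvmem : ∀ k : Fin (d+1), L.Es k *ᵥ u ∈ LinearMap.range (L.Es k).mulVecLin :=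
    fun k => ⟨u, rfl⟩
  have hidem : ∀ k : Fin (d+1), L.Es k * L.Es k = L.Es k := fun k => by
    rw [L.Es_mul, if_pos rfl]
  -- the entries of B
  have hAv : ∀ k j : Fin (d+1), L.Es k *ᵥ (L.A *ᵥ (L.Es j *ᵥ u)) = B k j • (L.Es k *ᵥ u) := by
    intro k j
    rw [hB j]
    rw [show L.Es k *ᵥ (∑ i, B i j • (L.Es i *ᵥ u))
        = ∑ i, (L.Es k).mulVecLin (B i j • (L.Es i *ᵥ u)) from
      map_sum (L.Es k).mulVecLin _ _]
    rw [Finset.sum_eq_single k]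
    · rw [_root_.map_smul]
      show B k j • (L.Es k *ᵥ (L.Es k *ᵥ u)) = _
      rw [Matrix.mulVec_mulVec, hidem k]
    · intro i _ hik
      rw [_root_.map_smul]
      show B i j • (L.Es k *ᵥ (L.Es i *ᵥ u)) = 0
      rw [Matrix.mulVec_mulVec, L.Es_mul, if_neg (fun h => hik h.symm), Matrix.zero_mulVec,
        smul_zero]
    · intro h
      exact absurd (Finset.mem_univ _) h
  have hmat : ∀ k j : Fin (d+1), (L.Es k * L.A * L.Es j) *ᵥ u = B k j • (L.Es k *ᵥ u) := by
    intro k j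
    rw [← Matrix.mulVec_mulVec, ← Matrix.mulVec_mulVec]
    exact hAv k j
  have hBz : ∀ k j : Fin (d+1), ((k:ℕ)+1 < (j:ℕ) ∨ (j:ℕ)+1 < (k:ℕ)) → B k j = 0 := by
    intro k j h
    have h1 := hmat k j
    rw [L.EsAEs_zero k j h, Matrix.zero_mulVec] at h1
    exact ((smul_eq_zero.mp h1.symm).resolve_right (hv0 k))
  have hBne : ∀ k j : Fin (d+1), ((k:ℕ)+1 = (j:ℕ) ∨ (j:ℕ)+1 = (k:ℕ)) → B k j ≠ 0 := by
    intro k j h hB0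
    have hm := hmat k j
    rw [hB0, zero_smul] at hm
    have hne : (L.Es k * L.A) *ᵥ (L.Es j *ᵥ u) ≠ 0 :=
      Stmt16Aux.mulVec_ne_zero_of_ne (hvmem j) (hv0 j) (hrkEs j) (L.EsAEs_ne k j h)
    apply hne
    rw [Matrix.mulVec_mulVec]
    exact hm
  -- u is a θ 0 eigenvector of A
  have hAE0 : L.A * L.E 0 = L.θ 0 • L.E 0 := by
    have h1 : ∀ i : Fin (d+1), (L.θ i • L.E i) * L.E 0 = if i = 0 then L.θ i • L.E i else 0 := by
      intro i
      rw [smul_mul_assoc, L.E_mul]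
      split <;> simp
    rw [L.A_eq, Finset.sum_mul, Finset.sum_congr rfl fun i _ => h1 i, Finset.sum_ite_eq']
    simp
  have hAu : L.A *ᵥ u = L.θ 0 • u := by
    conv_lhs => rw [← hu]
    rw [Matrix.mulVec_mulVec, hAE0, Matrix.smul_mulVec, hu]
  have husum : ∑ j : Fin (d+1), L.Es j *ᵥ u = u := by
    rw [← Stmt16Aux.sum_mulVec, L.Es_sum, Matrix.one_mulVec]
  -- the row sums of B are θ 0
  have hrow : ∀ k : Fin (d+1), ∑ j, B k j = L.θ 0 := by
    intro k
    have h1 : L.Es k *ᵥ (L.A *ᵥ u) = L.θ 0 • (L.Es k *ᵥ u) := by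
      rw [hAu, Matrix.mulVec_smul]
    have h2 : L.Es k *ᵥ (L.A *ᵥ u) = (∑ j, B k j) • (L.Es k *ᵥ u) := by
      conv_lhs => rw [← husum]
      rw [show L.A *ᵥ (∑ j : Fin (d+1), L.Es j *ᵥ u) = ∑ j : Fin (d+1), L.A *ᵥ (L.Es j *ᵥ u) from
        map_sum (L.A).mulVecLin _ _]
      rw [show L.Es k *ᵥ (∑ j : Fin (d+1), L.A *ᵥ (L.Es j *ᵥ u))
          = ∑ j : Fin (d+1), L.Es k *ᵥ (L.A *ᵥ (L.Es j *ᵥ u)) from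
        map_sum (L.Es k).mulVecLin _ _]
      rw [Finset.sum_congr rfl fun j _ => hAv k j, ← Finset.sum_smul]
    have heq : (∑ j, B k j) • (L.Es k *ᵥ u) = L.θ 0 • (L.Es k *ᵥ u) := h2.symm.trans h1
    have h3 : ((∑ j, B k j) - L.θ 0) • (L.Es k *ᵥ u) = 0 := by
      rw [sub_smul, heq, sub_self]
    exact sub_eq_zero.mp ((smul_eq_zero.mp h3).resolve_right (hv0 k))
  -- mentry helpers
  have hment : ∀ (i j : ℕ) (hi : i < d+1) (hj : j < d+1), mentry B i j = B ⟨i, hi⟩ ⟨j, hj⟩ := by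
    intro i j hi hj
    rw [mentry, dif_pos (⟨hi, hj⟩ : i < d+1 ∧ j < d+1)]
  have hment0 : ∀ (i j : ℕ), ¬(i < d+1 ∧ j < d+1) → mentry B i j = 0 := fun i j h => dif_neg h
  -- part (i)
  have part1 : ∀ i : ℕ, 1 ≤ i → i ≤ d → mentry B (i-1) i * mentry B i (i-1) = x i := by
    intro i h1 h2
    have hi : i < d + 1 := by omega
    have him : i - 1 < d + 1 := by omega
    have hxa : x i = Matrix.trace (L.Es ⟨i, hi⟩ * L.A * natIdx L.Es (i-1) * L.A) :=
      hx ⟨i, hi⟩ h1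
    have hnat : natIdx L.Es (i-1) = L.Es ⟨i-1, him⟩ := dif_pos him
    have hC : (L.Es ⟨i, hi⟩ * (L.A * L.Es ⟨i-1, him⟩ * L.A)) *ᵥ (L.Es ⟨i, hi⟩ *ᵥ u)
        = (B ⟨i-1, him⟩ ⟨i, hi⟩ * B ⟨i, hi⟩ ⟨i-1, him⟩) • (L.Es ⟨i, hi⟩ *ᵥ u) := by
      rw [show L.Es ⟨i, hi⟩ * (L.A * L.Es ⟨i-1, him⟩ * L.A)
          = ((L.Es ⟨i, hi⟩ * L.A * L.Es ⟨i-1, him⟩) * L.A) from by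
        simp only [Matrix.mul_assoc]]
      rw [← Matrix.mulVec_mulVec]
      rw [← Matrix.mulVec_mulVec (M := L.Es ⟨i, hi⟩ * L.A)]
      rw [hAv ⟨i-1, him⟩ ⟨i, hi⟩, Matrix.mulVec_smul, ← Matrix.mulVec_mulVec,
        hAv ⟨i, hi⟩ ⟨i-1, him⟩, smul_smul]
    have htr := Stmt16Aux.trace_sandwich (hidem ⟨i, hi⟩) (hvmem ⟨i, hi⟩) (hv0 ⟨i, hi⟩)
      (hrkEs ⟨i, hi⟩) hC
    rw [hment (i-1) i him hi, hment i (i-1) hi him, hxa, hnat,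
      show L.Es ⟨i, hi⟩ * L.A * L.Es ⟨i-1, him⟩ * L.A
          = L.Es ⟨i, hi⟩ * (L.A * L.Es ⟨i-1, him⟩ * L.A) from by
        simp only [Matrix.mul_assoc]]
    exact htr.symm
  -- part (ii)
  have part2 : ∀ i : Fin (d+1),
      (if (i:ℕ) = 0 then 0 else mentry B (i:ℕ) ((i:ℕ)-1)) +
        mentry B (i:ℕ) (i:ℕ) + mentry B (i:ℕ) ((i:ℕ)+1) = L.θ 0 := by
    intro i
    have hsplit : ∀ j : Fin (d+1),
        B i j = (if (j:ℕ)+1 = (i:ℕ) then B i j else 0) + (if j = i then B i j else 0)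
          + (if (j:ℕ) = (i:ℕ)+1 then B i j else 0) := by
      intro j
      have hji : j = i ↔ (j:ℕ) = (i:ℕ) := ⟨fun h => by rw [h], fun h => Fin.ext h⟩
      by_cases h1 : (j:ℕ)+1 = (i:ℕ)
      · rw [if_pos h1, if_neg (fun h => by rw [hji] at h; omega), if_neg (by omega),
          add_zero, add_zero]
      · by_cases h2 : j = i
        · have h2' := hji.mp h2
          rw [if_neg h1, if_pos h2, if_neg (by omega), zero_add, add_zero]
        · by_cases h3 : (j:ℕ) = (i:ℕ)+1
          · rw [if_neg h1, if_neg h2, if_pos h3, zero_add, zero_add]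
          · have hne : (j:ℕ) ≠ (i:ℕ) := fun h => h2 (hji.mpr h)
            rw [hBz i j (by omega), if_neg h1, if_neg h2, if_neg h3, add_zero, add_zero]
    have h3a : ∑ j : Fin (d+1), (if (j:ℕ)+1 = (i:ℕ) then B i j else 0)
        = (if (i:ℕ) = 0 then 0 else mentry B (i:ℕ) ((i:ℕ)-1)) := by
      by_cases h0 : (i:ℕ) = 0
      · rw [if_pos h0]
        apply Finset.sum_eq_zero
        intro j _
        rw [if_neg (by omega)]
      · rw [if_neg h0]
        have him : (i:ℕ) - 1 < d + 1 := by omega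
        rw [Finset.sum_eq_single (⟨(i:ℕ)-1, him⟩ : Fin (d+1))]
        · rw [if_pos (by simp; omega), hment _ _ i.isLt him]
        · intro j _ hj
          rw [if_neg (fun h => hj (Fin.ext (by simp; omega)))]
        · intro h
          exact absurd (Finset.mem_univ _) h
    have h3b : ∑ j : Fin (d+1), (if j = i then B i j else 0) = mentry B (i:ℕ) (i:ℕ) := by
      rw [Finset.sum_ite_eq' Finset.univ i (fun j => B i j), if_pos (Finset.mem_univ i),
        hment _ _ i.isLt i.isLt]
    have h3c : ∑ j : Fin (d+1), (if (j:ℕ) = (i:ℕ)+1 then B i j else 0)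
        = mentry B (i:ℕ) ((i:ℕ)+1) := by
      by_cases hd1 : (i:ℕ) + 1 < d + 1
      · rw [Finset.sum_eq_single (⟨(i:ℕ)+1, hd1⟩ : Fin (d+1))]
        · rw [if_pos (by simp), hment _ _ i.isLt hd1]
        · intro j _ hj
          rw [if_neg (fun h => hj (Fin.ext (by simpa using h)))]
        · intro h
          exact absurd (Finset.mem_univ _) h
      · rw [hment0 _ _ (by omega)]
        apply Finset.sum_eq_zero
        intro j _
        have := j.isLt
        rw [if_neg (by omega)]
    rw [← h3a, ← h3b, ← h3c, ← Finset.sum_add_distrib, ← Finset.sum_add_distrib,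
      Finset.sum_congr rfl fun j _ => (hsplit j).symm]
    exact hrow i
  -- diagonal entries are the a i
  have haB : ∀ n : ℕ, (hn : n < d + 1) → a n = mentry B n n := by
    intro n hn
    have hC : (L.Es ⟨n, hn⟩ * L.A) *ᵥ (L.Es ⟨n, hn⟩ *ᵥ u)
        = B ⟨n, hn⟩ ⟨n, hn⟩ • (L.Es ⟨n, hn⟩ *ᵥ u) := by
      rw [← Matrix.mulVec_mulVec]
      exact hAv ⟨n, hn⟩ ⟨n, hn⟩
    have htr := Stmt16Aux.trace_sandwich (hidem ⟨n, hn⟩) (hvmem ⟨n, hn⟩) (hv0 ⟨n, hn⟩)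
      (hrkEs ⟨n, hn⟩) hC
    have haa : a n = Matrix.trace (L.Es ⟨n, hn⟩ * L.A) := ha ⟨n, hn⟩
    rw [haa, htr, hment n n hn hn]
  -- nat version of part (ii)
  have part2' : ∀ n : ℕ, n ≤ d →
      (if n = 0 then 0 else mentry B n (n-1)) + mentry B n n + mentry B n (n+1) = L.θ 0 := by
    intro n hn
    exact part2 ⟨n, by omega⟩
  -- products of superdiagonal entries are nonzero
  have hprodne : ∀ n : ℕ, n ≤ d → (∏ h ∈ Finset.range n, mentry B h (h+1)) ≠ 0 := by
    intro n hn
    apply Finset.prod_ne_zero_iff.mpr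
    intro h hh
    have hhn : h < n := Finset.mem_range.mp hh
    have hlt1 : h < d+1 := by omega
    have hlt2 : h+1 < d+1 := by omega
    rw [hment h (h+1) hlt1 hlt2]
    exact hBne ⟨h, hlt1⟩ ⟨h+1, hlt2⟩ (Or.inl rfl)
  -- part (iii): the product formula
  have hmain : ∀ n : ℕ, n ≤ d →
      (∏ h ∈ Finset.range n, mentry B h (h+1)) = (p n).eval (L.θ 0) := by
    intro n
    induction n using Nat.strong_induction_on with
    | _ n ihn =>
      match n with
      | 0 =>
        intro _
        simp [hp0]
      | (m+1) =>
        intro hm1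
        have hm : m ≤ d := by omega
        have heval : (p (m+1)).eval (L.θ 0)
            = (L.θ 0 - a m) * (p m).eval (L.θ 0) - x m * (p (m-1)).eval (L.θ 0) := by
          have hq : p (m+1) = X * p m - C (a m) * p m - C (x m) * p (m-1) := by
            have := hrec m hm
            rw [this]; ring
          rw [hq]
          simp only [eval_sub, eval_mul, eval_X, eval_C]
          ring
        rw [Finset.prod_range_succ, ihn m (by omega) hm, heval]
        match m, hm with
        | 0, _ =>
          have hp2 := part2' 0 (by omega)
          rw [if_pos rfl] at hp2
          have ha0 : a 0 = mentry B 0 0 := haB 0 (by omega)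
          rw [hp0, hx0]
          simp only [eval_one, one_mul, mul_one, zero_mul, sub_zero]
          rw [ha0]
          linear_combination hp2
        | (r+1), hr =>
          have hxm : x (r+1) = mentry B r (r+1) * mentry B (r+1) r := by
            have := part1 (r+1) (by omega) hr
            simpa using this.symm
          have hp2 := part2' (r+1) hr
          rw [if_neg (by omega)] at hp2
          simp only [Nat.add_sub_cancel] at hp2 hxm ⊢
          have hpm1 : (p r).eval (L.θ 0) = ∏ h ∈ Finset.range r, mentry B h (h+1) :=
            (ihn r (by omega) (by omega)).symm
          have hpm : (p (r+1)).eval (L.θ 0) = ∏ h ∈ Finset.range (r+1), mentry B h (h+1) :=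
            (ihn (r+1) (by omega) (by omega)).symm
          rw [hxm, hpm1, hpm, Finset.prod_range_succ, haB (r+1) (by omega)]
          have hθ : L.θ 0 = mentry B (r+1) r + mentry B (r+1) (r+1) + mentry B (r+1) (r+2) :=
            hp2.symm
          rw [hθ]
          ring
  refine ⟨part1, part2, fun i => ⟨hmain (i:ℕ) (Fin.is_le i), ?_⟩⟩
  rw [← hmain (i:ℕ) (Fin.is_le i)]
  exact hprodne (i:ℕ) (Fin.is_le i)
end

section
/- Let Φ be a Leonard system with eigenvalue sequences θ_i, θ*_i and normalized polynomials u_i = p_i / p_i(θ_0) (for Φ) and u*_j = p*_j / p*_j(θ*_0) (for the dual system Φ*). Then Askey–Wilson duality holds: u_i(θ_j) = u*_j(θ*_i) for all 0 ≤ i, j ≤ d. -/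
open Matrix Polynomial

namespace AWDual

set_option linter.unusedSectionVars false
variable {K : Type*} [Field K] {m : Type*} [Fintype m] [DecidableEq m]

lemma mul_vecMulVec (B : Matrix m m K) (u v : m → K) :
    B * vecMulVec u v = vecMulVec (B *ᵥ u) v := by
  ext x y
  simp [Matrix.mul_apply, vecMulVec_apply, Matrix.mulVec, dotProduct,
    Finset.sum_mul, mul_assoc]

lemma vecMulVec_mul (C : Matrix m m K) (u v : m → K) :
    vecMulVec u v * C = vecMulVec u (v ᵥ* C) := by
  ext x y
  simp [Matrix.mul_apply, vecMulVec_apply, Matrix.vecMul, dotProduct,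
    Finset.mul_sum, mul_assoc]

lemma vecMulVec_eq_zero_iff {u v : m → K} :
    vecMulVec u v = 0 ↔ u = 0 ∨ v = 0 := by
  constructor
  · intro h
    by_contra hc
    push_neg at hc
    obtain ⟨hu, hv⟩ := hc
    obtain ⟨x, hx⟩ := Function.ne_iff.mp hu
    obtain ⟨y, hy⟩ := Function.ne_iff.mp hv
    have := congrFun (congrFun h x) y
    simp [vecMulVec_apply] at this
    rcases this with h1 | h1 <;> simp_all
  · rintro (rfl | rfl) <;> ext x y <;> simp [vecMulVec_apply]

lemma vecMul_vecMulVec (w u v : m → K) :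
    w ᵥ* vecMulVec u v = (w ⬝ᵥ u) • v := by
  ext y
  simp [Matrix.vecMul, vecMulVec_apply, dotProduct, Finset.sum_mul, mul_assoc]

lemma trace_vecMulVec (u v : m → K) : Matrix.trace (vecMulVec u v) = v ⬝ᵥ u := by
  simp [Matrix.trace, Matrix.diag, vecMulVec_apply, dotProduct, mul_comm]

lemma vecMulVec_smul_right (u v : m → K) (c : K) :
    vecMulVec u (c • v) = c • vecMulVec u v := by
  ext x y
  simp [vecMulVec_apply, Matrix.smul_apply]
  ring

/-- sandwich identity for rank-one idempotents -/
lemma sandwich {e : Matrix m m K} (u v : m → K) (he : e = vecMulVec u v)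
    (M : Matrix m m K) : e * M * e = Matrix.trace (e * M) • e := by
  subst he
  rw [vecMulVec_mul, vecMulVec_mul, vecMul_vecMulVec, vecMulVec_smul_right,
    trace_vecMulVec]

lemma outer_prod_ne_zero {e B C : Matrix m m K} (u v : m → K) (he : e = vecMulVec u v)
    (hB : B * e ≠ 0) (hC : e * C ≠ 0) : B * e * C ≠ 0 := by
  subst he
  rw [mul_vecMulVec] at hB ⊢
  rw [vecMulVec_mul] at hC ⊢
  intro h
  rw [vecMulVec_eq_zero_iff] at h
  rcases h with h | h
  · exact hB (vecMulVec_eq_zero_iff.mpr (Or.inl h))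
  · exact hC (vecMulVec_eq_zero_iff.mpr (Or.inr h))

lemma smul_cancel {e : Matrix m m K} (he : e ≠ 0) {c c' : K}
    (h : c • e = c' • e) : c = c' := by
  by_contra hc
  apply he
  have : (c - c') • e = 0 := by rw [sub_smul, h, sub_self]
  rcases smul_eq_zero.mp this with h1 | h1
  · exact absurd (sub_eq_zero.mp h1) hc
  · exact h1


lemma vecMulVec_mul_vecMulVec (u v u' v' : m → K) :
    vecMulVec u v * vecMulVec u' v' = (v ⬝ᵥ u') • vecMulVec u v' := by
  rw [vecMulVec_mul, vecMul_vecMulVec, vecMulVec_smul_right]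

lemma mulVec_sum' {ι : Type*} (s : Finset ι) (M : Matrix m m K) (f : ι → (m → K)) :
    M *ᵥ (∑ j ∈ s, f j) = ∑ j ∈ s, M *ᵥ f j := by
  classical
  induction s using Finset.induction_on with
  | empty => simp [Matrix.mulVec_zero]
  | insert _ _ h ih => rw [Finset.sum_insert h, Finset.sum_insert h, Matrix.mulVec_add, ih]

variable {n : ℕ}

lemma exists_vecMulVec (F : Fin (n+1) → Matrix (Fin (n+1)) (Fin (n+1)) K)
    (hmul : ∀ i j, F i * F j = if i = j then F i else 0)
    (hsum : ∑ i, F i = 1) (hne : ∀ i, F i ≠ 0) :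
    ∀ i, ∃ u v, F i = vecMulVec u v ∧ v ⬝ᵥ u = 1 := by
  have hcol : ∀ j, ∃ c : Fin (n+1), (fun x => F j x c) ≠ 0 := by
    intro j
    by_contra hc
    push_neg at hc
    apply hne j
    ext x y
    have := congrFun (hc y) x
    simpa using this
  choose c hc using hcol
  set u : Fin (n+1) → (Fin (n+1) → K) := fun j => fun x => F j x (c j) with hu
  have huv : ∀ i j, F i *ᵥ u j = if i = j then u j else 0 := by
    intro i j
    have h1 : u j = F j *ᵥ Pi.single (c j) 1 := by
      ext x; simp [Matrix.mulVec_single, hu]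
    rw [h1, Matrix.mulVec_mulVec, hmul i j]
    by_cases h : i = j
    · simp [h, ← h1]
    · simp only [if_neg h]
      rw [Matrix.zero_mulVec]
  have hune : ∀ j, u j ≠ 0 := fun j => hc j
  have li : LinearIndependent K u := by
    rw [Fintype.linearIndependent_iff]
    intro g hg i
    have h2 : F i *ᵥ (∑ j, g j • u j) = g i • u i := by
      rw [mulVec_sum']
      rw [Finset.sum_eq_single i]
      · rw [Matrix.mulVec_smul, huv]; simp
      · intro b _ hb
        rw [Matrix.mulVec_smul, huv]
        simp [Ne.symm hb]
      · simp
    rw [hg, Matrix.mulVec_zero] at h2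
    rcases smul_eq_zero.mp h2.symm with h | h
    · exact h
    · exact absurd h (hune i)
  have hcard : Fintype.card (Fin (n+1)) = Module.finrank K (Fin (n+1) → K) := by
    simp [Module.finrank_fintype_fun_eq_card]
  let b := basisOfLinearIndependentOfCardEqFinrank li hcard
  have hb : ∀ j, b j = u j := fun j =>
    congrFun (coe_basisOfLinearIndependentOfCardEqFinrank li hcard) j
  intro i
  have hmv : ∀ w : Fin (n+1) → K, F i *ᵥ w = b.repr w i • u i := by
    intro w
    conv_lhs => rw [← Module.Basis.sum_repr b w]
    rw [mulVec_sum']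
    rw [Finset.sum_eq_single i]
    · rw [hb, Matrix.mulVec_smul, huv]; simp
    · intro j _ hj
      rw [hb, Matrix.mulVec_smul, huv]
      simp [Ne.symm hj]
    · simp
  refine ⟨u i, fun y => b.repr (Pi.single y 1) i, ?_, ?_⟩
  · ext x y
    have := congrFun (hmv (Pi.single y 1)) x
    rw [Matrix.mulVec_single] at this
    simp only [MulOpposite.op_one, one_smul] at this
    rw [vecMulVec_apply, mul_comm]
    simpa using this
  · set v : Fin (n+1) → K := fun y => b.repr (Pi.single y 1) i with hv
    have hFi : F i = vecMulVec (u i) v := by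
      ext x y
      have := congrFun (hmv (Pi.single y 1)) x
      rw [Matrix.mulVec_single] at this
      simp only [MulOpposite.op_one, one_smul] at this
      rw [vecMulVec_apply, mul_comm]
      simpa [hv] using this
    have hid : F i * F i = F i := by rw [hmul]; simp
    rw [hFi, vecMulVec_mul_vecMulVec] at hid
    have hne' : vecMulVec (u i) v ≠ 0 := by rw [← hFi]; exact hne i
    exact smul_cancel hne' (show _ • _ = (1:K) • _ by rw [one_smul]; exact hid)



section Conc

variable {K : Type*} [Field K] {d : ℕ}

local notation "Mat" => Matrix (Fin (d+1)) (Fin (d+1)) K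

lemma sum_three (f : ℕ → Mat) (i : ℕ) (hid : i ≤ d)
    (h : ∀ k, k ≠ i-1 → k ≠ i → k ≠ i+1 → f k = 0) :
    ∑ k ∈ Finset.range (d+2), f k = (if 1 ≤ i then f (i-1) else 0) + f i + f (i+1) := by
  have hsub : ({i-1, i, i+1} : Finset ℕ) ⊆ Finset.range (d+2) := by
    intro k hk
    simp only [Finset.mem_insert, Finset.mem_singleton] at hk
    simp only [Finset.mem_range]
    omega
  have hzero : ∀ k ∈ Finset.range (d+2), k ∉ ({i-1, i, i+1} : Finset ℕ) → f k = 0 := by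
    intro k _ hk
    simp only [Finset.mem_insert, Finset.mem_singleton] at hk
    push_neg at hk
    exact h k hk.1 hk.2.1 hk.2.2
  rw [← Finset.sum_subset hsub hzero]
  rcases Nat.eq_zero_or_pos i with rfl | hpos0
  · have : ({0-1, 0, 0+1} : Finset ℕ) = {0, 1} := by decide
    rw [this, Finset.sum_pair (by omega : (0:ℕ) ≠ 1)]
    simp
  · have hpos : 1 ≤ i := hpos0
    have h1 : i - 1 ∉ ({i, i+1} : Finset ℕ) := by
      simp only [Finset.mem_insert, Finset.mem_singleton]; omega
    rw [Finset.sum_insert h1, Finset.sum_pair (by omega : i ≠ i+1), if_pos hpos]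
    exact (add_assoc _ _ _).symm

variable (G : ℕ → Matrix (Fin (d+1)) (Fin (d+1)) K) (B : Matrix (Fin (d+1)) (Fin (d+1)) K)

lemma G_ne_zero (hGr1 : ∀ k, k ≤ d → ∃ u v, G k = vecMulVec u v ∧ v ⬝ᵥ u = 1)
    {k : ℕ} (hk : k ≤ d) : G k ≠ 0 := by
  obtain ⟨u, v, hG, hdot⟩ := hGr1 k hk
  intro h0
  rw [h0] at hG
  rcases vecMulVec_eq_zero_iff.mp hG.symm with rfl | rfl <;> simp at hdot

lemma trisum
    (hGhigh : ∀ k, d < k → G k = 0)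
    (hGsum : ∑ k ∈ Finset.range (d+1), G k = 1)
    (hGtri0 : ∀ k l, (k+1 < l ∨ l+1 < k) → G k * B * G l = 0)
    {i : ℕ} (hid : i ≤ d) (R : Mat) (hR : G i * R = R) :
    B * R = (if 1 ≤ i then G (i-1) * (B * R) else 0) + G i * (B * R) + G (i+1) * (B * R) := by
  have key : ∀ k, G k * (B * R) = (G k * B * G i) * R := by
    intro k
    conv_lhs => rw [← hR]
    simp only [mul_assoc]
  have hsum2 : ∑ k ∈ Finset.range (d+2), G k = 1 := by
    rw [Finset.sum_range_succ, hGhigh (d+1) (by omega), add_zero, hGsum]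
  have hBR : B * R = ∑ k ∈ Finset.range (d+2), G k * (B * R) := by
    calc B * R = 1 * (B * R) := (one_mul _).symm
      _ = (∑ k ∈ Finset.range (d+2), G k) * (B * R) := by rw [hsum2]
      _ = ∑ k ∈ Finset.range (d+2), G k * (B * R) := Finset.sum_mul _ _ _
  conv_lhs => rw [hBR]
  refine sum_three (fun k => G k * (B * R)) i hid ?_
  intro k h1 h2 h3
  rw [key]
  have hz : G k * B * G i = 0 := by
    apply hGtri0
    omega
  rw [hz, zero_mul]

set_option maxHeartbeats 1600000 in
lemma conc
    (hGhigh : ∀ k, d < k → G k = 0)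
    (hGmul : ∀ k l, G k * G l = if k = l then G k else 0)
    (hGsum : ∑ k ∈ Finset.range (d+1), G k = 1)
    (hGtri0 : ∀ k l, (k+1 < l ∨ l+1 < k) → G k * B * G l = 0)
    (hGtrine : ∀ k l, k ≤ d → l ≤ d → (k+1 = l ∨ l+1 = k) → G k * B * G l ≠ 0)
    (hGr1 : ∀ k, k ≤ d → ∃ u v, G k = vecMulVec u v ∧ v ⬝ᵥ u = 1)
    (a x : ℕ → K) (ha : ∀ k, k ≤ d → a k = Matrix.trace (G k * B)) (hx0 : x 0 = 0)
    (hx : ∀ k, 1 ≤ k → k ≤ d → x k = Matrix.trace (G k * B * G (k-1) * B))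
    (p : ℕ → Polynomial K) (hp0 : p 0 = 1)
    (hrec : ∀ i : ℕ, i ≤ d →
      Polynomial.X * p i = p (i+1) + Polynomial.C (a i) * p i + Polynomial.C (x i) * p (i-1)) :
    ∀ i, i ≤ d → aeval B (p i) * G 0 = G i * (aeval B (p i) * G 0)
      ∧ G i * (aeval B (p i) * G 0) ≠ 0 := by
  have main : ∀ i, i ≤ d → aeval B (p i) * G 0 = G i * (aeval B (p i) * G 0)
      ∧ G i * (aeval B (p i) * G 0) ≠ 0
      ∧ (1 ≤ i → G i * (aeval B (p i) * G 0)
          = G i * B * (G (i-1) * (aeval B (p (i-1)) * G 0)))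
      ∧ (1 ≤ i → aeval B (p (i-1)) * G 0 = G (i-1) * (aeval B (p (i-1)) * G 0)) := by
    intro i
    induction i with
    | zero =>
      intro _
      have h1 : aeval B (p 0) * G 0 = G 0 := by rw [hp0, _root_.map_one, one_mul]
      have h2 : G 0 * G 0 = G 0 := by rw [hGmul]; simp
      refine ⟨by rw [h1, h2], ?_, by omega, by omega⟩
      rw [h1, h2]
      exact G_ne_zero G hGr1 (by omega)
    | succ i IH =>
      intro hi1
      have hid : i ≤ d := by omega
      obtain ⟨hC1, hC2, hC1b, hC1p'⟩ := IH hid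
      have hGiR : G i * (G i * (aeval B (p i) * G 0)) = G i * (aeval B (p i) * G 0) := by
        rw [← mul_assoc, hGmul]; simp
      set W : Matrix (Fin (d+1)) (Fin (d+1)) K := aeval B (p (i-1)) * G 0 with hW
      set R : Matrix (Fin (d+1)) (Fin (d+1)) K := G i * (aeval B (p i) * G 0) with hRdef
      -- polynomial recurrence
      have hps : p (i+1) = Polynomial.X * p i - Polynomial.C (a i) * p i
          - Polynomial.C (x i) * p (i-1) := by
        rw [hrec i hid]; ring
      have haev : aeval B (p (i+1)) * G 0 = B * R - a i • R - x i • W := by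
        rw [hps, _root_.map_sub, _root_.map_sub, _root_.map_mul, _root_.map_mul,
          _root_.map_mul, aeval_X, aeval_C, aeval_C]
        simp only [Algebra.algebraMap_eq_smul_one, smul_mul_assoc, one_mul, sub_mul, mul_assoc]
        rw [hC1]
      -- sandwich values
      obtain ⟨u, v, hGi, hdot⟩ := hGr1 i hid
      have hsand : G i * B * G i = a i • G i := by
        rw [sandwich u v hGi B, ← ha i hid]
      have hBR : B * R = (if 1 ≤ i then G (i-1) * (B * R) else 0) + G i * (B * R)
          + G (i+1) * (B * R) := trisum G B hGhigh hGsum hGtri0 hid R hGiR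
      have hmid : G i * (B * R) = a i • R := by
        have h5 : G i * (B * R) = (G i * B * G i) * R := by
          conv_lhs => rw [← hGiR]
          simp only [mul_assoc]
        rw [h5, hsand, smul_mul_assoc, hGiR]
      have hlow : (if 1 ≤ i then G (i-1) * (B * R) else 0) = x i • W := by
        by_cases h1i : 1 ≤ i
        · rw [if_pos h1i]
          have hC1p : W = G (i-1) * W := hC1p' h1i
          have hRb : R = G i * B * (G (i-1) * W) := hC1b h1i
          obtain ⟨u', v', hGi1, hdot'⟩ := hGr1 (i-1) (by omega)
          have hsand2 : G (i-1) * (B * G i * B) * G (i-1) = x i • G (i-1) := by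
            rw [sandwich u' v' hGi1 (B * G i * B)]
            have h6 : Matrix.trace (G (i-1) * (B * G i * B)) = x i := by
              rw [hx i h1i hid]
              have h2 : G i * B * G (i-1) * B = (G i * B) * (G (i-1) * B) := by simp only [mul_assoc]
              have h3 : G (i-1) * (B * G i * B) = (G (i-1) * B) * (G i * B) := by simp only [mul_assoc]
              rw [h2, h3, Matrix.trace_mul_comm]
            rw [h6]
          calc G (i-1) * (B * R)
              = (G (i-1) * (B * G i * B) * G (i-1)) * W := by
                rw [hRb]
                simp only [mul_assoc]
            _ = x i • (G (i-1) * W) := by rw [hsand2, smul_mul_assoc]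
            _ = x i • W := by rw [← hC1p]
        · rw [if_neg h1i]
          have h7 : i = 0 := by omega
          subst h7
          rw [hx0, zero_smul]
      -- final
      rw [hmid, hlow] at hBR
      have hfin : aeval B (p (i+1)) * G 0 = G (i+1) * (B * R) := by
        rw [haev]
        conv_lhs => rw [hBR]
        abel
      have hnext : G (i+1) * (aeval B (p (i+1)) * G 0) = G (i+1) * (B * R) := by
        rw [hfin, ← mul_assoc, hGmul]
        simp
      have hne : G (i+1) * (B * R) ≠ 0 := by
        have h1 : G (i+1) * (B * R) = (G (i+1) * B) * G i * (aeval B (p i) * G 0) := by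
          rw [hRdef]
          simp only [← mul_assoc]
        rw [h1]
        apply outer_prod_ne_zero u v hGi
        · exact hGtrine (i+1) i hi1 hid (Or.inr rfl)
        · exact hC2
      have hidem : G (i+1) * (G (i+1) * (B * R)) = G (i+1) * (B * R) := by
        rw [← mul_assoc, hGmul]; simp
      refine ⟨by rw [hfin]; exact hidem.symm, by rw [hnext]; exact hne, fun _ => ?_, fun _ => ?_⟩
      · rw [hnext]
        simp only [Nat.add_sub_cancel]
        rw [← hRdef]
        simp only [mul_assoc]
      · simp only [Nat.add_sub_cancel]
        exact hC1
  intro i hi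
  exact ⟨(main i hi).1, (main i hi).2.1⟩

/-- the concentration data, packaged with the C1b component -/
lemma conc' 
    (hGhigh : ∀ k, d < k → G k = 0)
    (hGmul : ∀ k l, G k * G l = if k = l then G k else 0)
    (hGsum : ∑ k ∈ Finset.range (d+1), G k = 1)
    (hGtri0 : ∀ k l, (k+1 < l ∨ l+1 < k) → G k * B * G l = 0)
    (hGtrine : ∀ k l, k ≤ d → l ≤ d → (k+1 = l ∨ l+1 = k) → G k * B * G l ≠ 0)
    (hGr1 : ∀ k, k ≤ d → ∃ u v, G k = vecMulVec u v ∧ v ⬝ᵥ u = 1)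
    (a x : ℕ → K) (ha : ∀ k, k ≤ d → a k = Matrix.trace (G k * B)) (hx0 : x 0 = 0)
    (hx : ∀ k, 1 ≤ k → k ≤ d → x k = Matrix.trace (G k * B * G (k-1) * B))
    (p : ℕ → Polynomial K) (hp0 : p 0 = 1)
    (hrec : ∀ i : ℕ, i ≤ d →
      Polynomial.X * p i = p (i+1) + Polynomial.C (a i) * p i + Polynomial.C (x i) * p (i-1)) :
    ∀ i, i ≤ d → aeval B (p i) * G 0 = G i * (aeval B (p i) * G 0)
      ∧ G i * (aeval B (p i) * G 0) ≠ 0 :=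
  conc G B hGhigh hGmul hGsum hGtri0 hGtrine hGr1 a x ha hx0 hx p hp0 hrec

lemma ppath
    (hGmul : ∀ k l, G k * G l = if k = l then G k else 0)
    (hGsum : ∑ k ∈ Finset.range (d+1), G k = 1)
    (hGtri0 : ∀ k l, (k+1 < l ∨ l+1 < k) → G k * B * G l = 0) :
    ∀ k l, k < l → G 0 * B^k * G l = 0 := by
  intro k
  induction k with
  | zero =>
    intro l hl
    rw [pow_zero, mul_one, hGmul]
    simp only [if_neg (by omega : (0:ℕ) ≠ l)]
  | succ k IHk =>
    intro l hl
    have h1 : G 0 * B^(k+1) * G l = ∑ m ∈ Finset.range (d+1),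
        (G 0 * B^k * G m) * (B * G l) := by
      have h2 : G 0 * B^(k+1) * G l = (G 0 * B^k) * ((∑ m ∈ Finset.range (d+1), G m) * (B * G l)) := by
        rw [hGsum, one_mul, pow_succ]
        simp only [mul_assoc]
      rw [h2, Finset.sum_mul, Finset.mul_sum]
      congr 1
      ext m
      simp only [mul_assoc]
    rw [h1]
    apply Finset.sum_eq_zero
    intro m _
    by_cases hmk : k < m
    · rw [IHk m hmk, zero_mul]
    · have h3 : G m * B * G l = 0 := hGtri0 m l (Or.inl (by omega))
      have h4 : (G 0 * B^k * G m) * (B * G l) = (G 0 * B^k) * (G m * B * G l) := by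
        simp only [mul_assoc]
      rw [h4, h3, mul_zero]

end Conc

section Spec

variable {K : Type*} [Field K] {d : ℕ}
variable (B : Matrix (Fin (d+1)) (Fin (d+1)) K) (F : Fin (d+1) → Matrix (Fin (d+1)) (Fin (d+1)) K)
variable (μ : Fin (d+1) → K)

lemma spec_pow (hmul : ∀ i j, F i * F j = if i = j then F i else 0)
    (hsum : ∑ i, F i = 1) (hBeq : B = ∑ i, μ i • F i) :
    ∀ n : ℕ, B^n = ∑ i, (μ i)^n • F i := by
  intro n
  induction n with
  | zero => simp [hsum]
  | succ n IH =>
    rw [pow_succ, IH, hBeq, Finset.sum_mul_sum]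
    refine Finset.sum_congr rfl (fun i _ => ?_)
    rw [Finset.sum_eq_single i]
    · rw [smul_mul_assoc, mul_smul_comm, hmul]
      simp [smul_smul, pow_succ]
    · intro j _ hj
      rw [smul_mul_assoc, mul_smul_comm, hmul]
      simp [if_neg (Ne.symm hj)]
    · simp

lemma spec (hmul : ∀ i j, F i * F j = if i = j then F i else 0)
    (hsum : ∑ i, F i = 1) (hBeq : B = ∑ i, μ i • F i) (f : Polynomial K) :
    aeval B f = ∑ l, (f.eval (μ l)) • F l := by
  rw [aeval_eq_sum_range]
  have h1 : ∀ k, f.coeff k • B^k = ∑ l, (f.coeff k * (μ l)^k) • F l := by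
    intro k
    rw [spec_pow B F μ hmul hsum hBeq k, Finset.smul_sum]
    exact Finset.sum_congr rfl (fun l _ => by rw [smul_smul])
  rw [Finset.sum_congr rfl (fun k _ => h1 k), Finset.sum_comm]
  refine Finset.sum_congr rfl (fun l _ => ?_)
  rw [eval_eq_sum_range, Finset.sum_smul]

lemma spec_mul_right (hmul : ∀ i j, F i * F j = if i = j then F i else 0)
    (hsum : ∑ i, F i = 1) (hBeq : B = ∑ i, μ i • F i) (f : Polynomial K) (l : Fin (d+1)) :
    aeval B f * F l = (f.eval (μ l)) • F l := by
  rw [spec B F μ hmul hsum hBeq f, Finset.sum_mul]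
  rw [Finset.sum_eq_single l]
  · rw [smul_mul_assoc, hmul]; simp
  · intro j _ hj
    rw [smul_mul_assoc, hmul]
    simp [if_neg hj]
  · simp

lemma spec_mul_left (hmul : ∀ i j, F i * F j = if i = j then F i else 0)
    (hsum : ∑ i, F i = 1) (hBeq : B = ∑ i, μ i • F i) (f : Polynomial K) (l : Fin (d+1)) :
    F l * aeval B f = (f.eval (μ l)) • F l := by
  rw [spec B F μ hmul hsum hBeq f, Finset.mul_sum]
  rw [Finset.sum_eq_single l]
  · rw [mul_smul_comm, hmul]; simp
  · intro j _ hj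
    rw [mul_smul_comm, hmul]
    simp [if_neg (Ne.symm hj)]
  · simp

end Spec

section Van

variable {K : Type*} [Field K] {d : ℕ}

lemma monic_rec (a x : ℕ → K) (p : ℕ → Polynomial K) (hp0 : p 0 = 1)
    (hrec : ∀ i : ℕ, i ≤ d →
      Polynomial.X * p i = p (i+1) + Polynomial.C (a i) * p i + Polynomial.C (x i) * p (i-1)) :
    ∀ m, m ≤ d → (p m).Monic ∧ (p m).natDegree = m := by
  have main : ∀ m, m ≤ d → ((p m).Monic ∧ (p m).natDegree = m)
      ∧ ((p (m-1)).Monic ∧ (p (m-1)).natDegree = m-1) := by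
    intro m
    induction m with
    | zero =>
      intro _
      refine ⟨⟨?_, ?_⟩, ⟨?_, ?_⟩⟩ <;> simp [hp0, monic_one]
    | succ m IH =>
      intro hm1
      obtain ⟨⟨hmon, hdeg⟩, ⟨hmonp, hdegp⟩⟩ := IH (by omega)
      have hps : p (m+1) = Polynomial.X * p m
          + (-(Polynomial.C (a m) * p m) - Polynomial.C (x m) * p (m-1)) := by
        rw [hrec m (by omega)]; ring
      have h1 : (Polynomial.X * p m).Monic := Polynomial.monic_X.mul hmon
      have hd1 : (Polynomial.X * p m).natDegree = m + 1 := by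
        rw [Polynomial.monic_X.natDegree_mul hmon, hdeg, Polynomial.natDegree_X]
        omega
      have hdeg1 : (Polynomial.X * p m).degree = ((m+1 : ℕ) : WithBot ℕ) := by
        rw [Polynomial.degree_eq_natDegree h1.ne_zero, hd1]
      have hlt : (-(Polynomial.C (a m) * p m) - Polynomial.C (x m) * p (m-1)).degree
          < (Polynomial.X * p m).degree := by
        rw [hdeg1]
        apply lt_of_le_of_lt (Polynomial.degree_sub_le _ _)
        rw [max_lt_iff]
        constructor
        · rw [Polynomial.degree_neg]
          apply lt_of_le_of_lt (Polynomial.degree_mul_le _ _)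
          apply lt_of_le_of_lt (add_le_add Polynomial.degree_C_le (Polynomial.degree_le_natDegree))
          rw [hdeg, zero_add]
          exact_mod_cast (by omega : m < m + 1)
        · apply lt_of_le_of_lt (Polynomial.degree_mul_le _ _)
          apply lt_of_le_of_lt (add_le_add Polynomial.degree_C_le (Polynomial.degree_le_natDegree))
          rw [hdegp, zero_add]
          exact_mod_cast (by omega : m - 1 < m + 1)
      have hmon1 : (p (m+1)).Monic := by
        rw [hps]
        exact h1.add_of_left hlt
      have hdegm1 : (p (m+1)).natDegree = m + 1 := by
        have : (p (m+1)).degree = (Polynomial.X * p m).degree := by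
          rw [hps]
          exact Polynomial.degree_add_eq_left_of_degree_lt hlt
        rw [hdeg1] at this
        exact Polynomial.natDegree_eq_of_degree_eq_some this
      refine ⟨⟨hmon1, hdegm1⟩, ?_⟩
      simpa using ⟨hmon, hdeg⟩
  intro m hm
  exact (main m hm).1

lemma van (G : ℕ → Matrix (Fin (d+1)) (Fin (d+1)) K) (B : Matrix (Fin (d+1)) (Fin (d+1)) K)
    (q : ℕ → Polynomial K)
    (hmonic : ∀ m, m ≤ d → (q m).Monic ∧ (q m).natDegree = m)
    (hconc : ∀ m, m ≤ d → G 0 * (aeval B (q m) * G m) ≠ 0)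
    (hpp : ∀ k l, k < l → G 0 * B^k * G l = 0) :
    ∀ f : Polynomial K, f.natDegree ≤ d → G 0 * aeval B f = 0 → f = 0 := by
  intro f hdeg h0
  by_contra hf0
  set m := f.natDegree with hm
  obtain ⟨hmon, hdq⟩ := hmonic m hdeg
  have hlc : f.leadingCoeff ≠ 0 := Polynomial.leadingCoeff_ne_zero.mpr hf0
  set g : Polynomial K := f - f.leadingCoeff • q m with hg
  have hsmall : ∀ h : Polynomial K, h.natDegree < m ∨ h = 0 → G 0 * aeval B h * G m = 0 := by
    intro h hh
    rcases hh with hh | rfl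
    · rw [aeval_eq_sum_range, Finset.mul_sum, Finset.sum_mul]
      apply Finset.sum_eq_zero
      intro k hk
      rw [mul_smul_comm, smul_mul_assoc]
      have hzz : G 0 * B^k * G m = 0 := by
        apply hpp
        simp only [Finset.mem_range] at hk
        omega
      rw [hzz, smul_zero]
    · simp
  have hgcase : g.natDegree < m ∨ g = 0 := by
    by_cases hgz : g = 0
    · right; exact hgz
    · left
      rw [Polynomial.natDegree_lt_iff_degree_lt hgz]
      have hq0 : q m ≠ 0 := hmon.ne_zero
      have hdf : f.degree = ((m:ℕ) : WithBot ℕ) := Polynomial.degree_eq_natDegree hf0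
      have hdsm : (f.leadingCoeff • q m).degree = f.degree := by
        rw [Polynomial.smul_eq_C_mul, hdf]
        rw [Polynomial.degree_C_mul (by exact hlc)]
        rw [Polynomial.degree_eq_natDegree hq0, hdq]
      have hlcs : (f.leadingCoeff • q m).leadingCoeff = f.leadingCoeff := by
        rw [Polynomial.smul_eq_C_mul, Polynomial.leadingCoeff_mul, Polynomial.leadingCoeff_C,
          hmon.leadingCoeff, mul_one]
      rw [← hdf]
      exact Polynomial.degree_sub_lt hdsm.symm hf0 hlcs.symm
  have hfg : f = g + f.leadingCoeff • q m := by rw [hg]; abel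
  have key : (0 : Matrix (Fin (d+1)) (Fin (d+1)) K)
      = f.leadingCoeff • (G 0 * (aeval B (q m) * G m)) := by
    have h2 : G 0 * aeval B f * G m = 0 := by rw [h0, zero_mul]
    rw [hfg] at h2
    rw [_root_.map_add, _root_.map_smul] at h2
    rw [mul_add, add_mul] at h2
    rw [hsmall g hgcase] at h2
    rw [zero_add] at h2
    rw [mul_smul_comm, smul_mul_assoc] at h2
    rw [← h2, mul_assoc]
  rcases smul_eq_zero.mp key.symm with h | h
  · exact hlc h
  · exact hconc m hdeg h

lemma nonv (G : ℕ → Matrix (Fin (d+1)) (Fin (d+1)) K) (Bs : Matrix (Fin (d+1)) (Fin (d+1)) K)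
    (F : Fin (d+1) → Matrix (Fin (d+1)) (Fin (d+1)) K) (μ : Fin (d+1) → K)
    (hμ : Function.Injective μ)
    (hspec : ∀ f : Polynomial K, aeval Bs f = ∑ l, (f.eval (μ l)) • F l)
    (hvan : ∀ f : Polynomial K, f.natDegree ≤ d → G 0 * aeval Bs f = 0 → f = 0) :
    ∀ i : Fin (d+1), G 0 * F i ≠ 0 := by
  intro i h0
  set f : Polynomial K := ∏ l ∈ Finset.univ.erase i, (Polynomial.X - Polynomial.C (μ l)) with hf
  have hdeg : f.natDegree = d := by
    rw [hf, Polynomial.natDegree_prod_of_monic _ _ (fun l _ => Polynomial.monic_X_sub_C (μ l))]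
    simp [Finset.card_erase_of_mem]
  have hev0 : ∀ l : Fin (d+1), l ≠ i → f.eval (μ l) = 0 := by
    intro l hl
    rw [hf, Polynomial.eval_prod]
    apply Finset.prod_eq_zero (Finset.mem_erase.mpr ⟨hl, Finset.mem_univ l⟩)
    simp
  have hevi : f.eval (μ i) ≠ 0 := by
    rw [hf, Polynomial.eval_prod]
    apply Finset.prod_ne_zero_iff.mpr
    intro l hl
    simp only [Polynomial.eval_sub, Polynomial.eval_X, Polynomial.eval_C]
    rw [sub_ne_zero]
    intro hcon
    exact (Finset.mem_erase.mp hl).1 (hμ hcon.symm)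
  have hzero : G 0 * aeval Bs f = 0 := by
    rw [hspec, Finset.mul_sum]
    rw [Finset.sum_eq_single i]
    · rw [mul_smul_comm, h0, smul_zero]
    · intro l _ hl
      rw [hev0 l hl, zero_smul, mul_zero]
    · simp
  have := hvan f (by omega) hzero
  rw [this] at hevi
  simp at hevi

end Van

section Bridge

variable {K : Type*} [Field K] {d : ℕ}
variable (F : Fin (d+1) → Matrix (Fin (d+1)) (Fin (d+1)) K)
variable (B : Matrix (Fin (d+1)) (Fin (d+1)) K)

lemma natIdx_lt {k : ℕ} (h : k < d+1) : natIdx F k = F ⟨k, h⟩ := dif_pos h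

lemma natIdx_ge {k : ℕ} (h : d+1 ≤ k) : natIdx F k = 0 := dif_neg (by omega)

lemma natIdx_fin (i : Fin (d+1)) : natIdx F (i : ℕ) = F i := by
  rw [natIdx_lt F i.isLt]

lemma bridge_mul (hmul : ∀ i j, F i * F j = if i = j then F i else 0) :
    ∀ k l, natIdx F k * natIdx F l = if k = l then natIdx F k else 0 := by
  intro k l
  by_cases hk : k < d+1
  · by_cases hl : l < d+1
    · rw [natIdx_lt F hk, natIdx_lt F hl, hmul]
      by_cases h : k = l
      · subst h
        simp [natIdx_lt F hk]
      · rw [if_neg (by simp [Fin.ext_iff]; omega), if_neg h]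
    · rw [natIdx_ge F (by omega : d+1 ≤ l), mul_zero]
      rw [if_neg (by omega)]
  · have h2 : natIdx F k = 0 := natIdx_ge F (by omega)
    rw [h2, zero_mul]
    split_ifs <;> rfl

lemma bridge_sum (hsum : ∑ i, F i = 1) :
    ∑ k ∈ Finset.range (d+1), natIdx F k = 1 := by
  rw [← Fin.sum_univ_eq_sum_range (fun k => natIdx F k) (d+1)]
  rw [← hsum]
  exact Finset.sum_congr rfl (fun i _ => natIdx_fin F i)

lemma bridge_tri0
    (htri : ∀ i j : Fin (d+1), ((i:ℕ) + 1 < j ∨ (j:ℕ) + 1 < i) → F i * B * F j = 0) :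
    ∀ k l, (k+1 < l ∨ l+1 < k) → natIdx F k * B * natIdx F l = 0 := by
  intro k l hkl
  by_cases hk : k < d+1
  · by_cases hl : l < d+1
    · rw [natIdx_lt F hk, natIdx_lt F hl]
      exact htri ⟨k, hk⟩ ⟨l, hl⟩ (by simpa using hkl)
    · rw [natIdx_ge F (by omega : d+1 ≤ l), mul_zero]
  · rw [natIdx_ge F (by omega : d+1 ≤ k), zero_mul, zero_mul]

lemma bridge_trine
    (htrine : ∀ i j : Fin (d+1), ((i:ℕ) + 1 = j ∨ (j:ℕ) + 1 = i) → F i * B * F j ≠ 0) :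
    ∀ k l, k ≤ d → l ≤ d → (k+1 = l ∨ l+1 = k) → natIdx F k * B * natIdx F l ≠ 0 := by
  intro k l hk hl hkl
  rw [natIdx_lt F (by omega : k < d+1), natIdx_lt F (by omega : l < d+1)]
  exact htrine ⟨k, by omega⟩ ⟨l, by omega⟩ (by simpa using hkl)

lemma bridge_r1 (hmul : ∀ i j, F i * F j = if i = j then F i else 0)
    (hsum : ∑ i, F i = 1) (hne : ∀ i, F i ≠ 0) :
    ∀ k, k ≤ d → ∃ u v, natIdx F k = vecMulVec u v ∧ v ⬝ᵥ u = 1 := by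
  intro k hk
  rw [natIdx_lt F (by omega : k < d+1)]
  exact exists_vecMulVec F hmul hsum hne ⟨k, by omega⟩

lemma vecMulVec_transpose (u v : Fin (d+1) → K) :
    (vecMulVec u v)ᵀ = vecMulVec v u := by
  ext x y
  simp [vecMulVec_apply, Matrix.transpose_apply, mul_comm]

lemma natIdx_transpose (k : ℕ) : natIdx (fun i => (F i)ᵀ) k = (natIdx F k)ᵀ := by
  by_cases hk : k < d+1
  · rw [natIdx_lt _ hk, natIdx_lt F hk]
  · rw [natIdx_ge _ (by omega), natIdx_ge F (by omega), Matrix.transpose_zero]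

lemma aeval_transpose (f : Polynomial K) : (aeval B f)ᵀ = aeval Bᵀ f := by
  rw [aeval_eq_sum_range, aeval_eq_sum_range, Matrix.transpose_sum]
  exact Finset.sum_congr rfl (fun k _ => by
    rw [Matrix.transpose_smul, Matrix.transpose_pow])

end Bridge

section Wrappers

variable {K : Type*} [Field K] {d : ℕ}
variable (F : Fin (d+1) → Matrix (Fin (d+1)) (Fin (d+1)) K)
variable (B : Matrix (Fin (d+1)) (Fin (d+1)) K)

lemma conc_right
    (hmul : ∀ i j, F i * F j = if i = j then F i else 0)
    (hsum : ∑ i, F i = 1)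
    (hne : ∀ i, F i ≠ 0)
    (htri0 : ∀ i j : Fin (d+1), ((i:ℕ)+1 < j ∨ (j:ℕ)+1 < i) → F i * B * F j = 0)
    (htrine : ∀ i j : Fin (d+1), ((i:ℕ)+1 = j ∨ (j:ℕ)+1 = i) → F i * B * F j ≠ 0)
    (a x : ℕ → K)
    (ha : ∀ k, k ≤ d → a k = Matrix.trace (natIdx F k * B)) (hx0 : x 0 = 0)
    (hx : ∀ k, 1 ≤ k → k ≤ d →
      x k = Matrix.trace (natIdx F k * B * natIdx F (k-1) * B))
    (p : ℕ → Polynomial K) (hp0 : p 0 = 1)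
    (hrec : ∀ i : ℕ, i ≤ d →
      Polynomial.X * p i = p (i+1) + Polynomial.C (a i) * p i + Polynomial.C (x i) * p (i-1)) :
    ∀ i, i ≤ d → aeval B (p i) * natIdx F 0 = natIdx F i * (aeval B (p i) * natIdx F 0)
      ∧ natIdx F i * (aeval B (p i) * natIdx F 0) ≠ 0 :=
  conc (natIdx F) B (fun k hk => natIdx_ge F (by omega)) (bridge_mul F hmul)
    (bridge_sum F hsum) (bridge_tri0 F B htri0) (bridge_trine F B htrine)
    (bridge_r1 F hmul hsum hne) a x ha hx0 hx p hp0 hrec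

lemma ppath_right
    (hmul : ∀ i j, F i * F j = if i = j then F i else 0)
    (hsum : ∑ i, F i = 1)
    (htri0 : ∀ i j : Fin (d+1), ((i:ℕ)+1 < j ∨ (j:ℕ)+1 < i) → F i * B * F j = 0) :
    ∀ k l, k < l → natIdx F 0 * B^k * natIdx F l = 0 :=
  ppath (natIdx F) B (bridge_mul F hmul) (bridge_sum F hsum) (bridge_tri0 F B htri0)

lemma conc_left
    (hmul : ∀ i j, F i * F j = if i = j then F i else 0)
    (hsum : ∑ i, F i = 1)
    (hne : ∀ i, F i ≠ 0)
    (htri0 : ∀ i j : Fin (d+1), ((i:ℕ)+1 < j ∨ (j:ℕ)+1 < i) → F i * B * F j = 0)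
    (htrine : ∀ i j : Fin (d+1), ((i:ℕ)+1 = j ∨ (j:ℕ)+1 = i) → F i * B * F j ≠ 0)
    (a x : ℕ → K)
    (ha : ∀ k, k ≤ d → a k = Matrix.trace (natIdx F k * B)) (hx0 : x 0 = 0)
    (hx : ∀ k, 1 ≤ k → k ≤ d →
      x k = Matrix.trace (natIdx F k * B * natIdx F (k-1) * B))
    (p : ℕ → Polynomial K) (hp0 : p 0 = 1)
    (hrec : ∀ i : ℕ, i ≤ d →
      Polynomial.X * p i = p (i+1) + Polynomial.C (a i) * p i + Polynomial.C (x i) * p (i-1)) :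
    ∀ i, i ≤ d → natIdx F 0 * aeval B (p i) = natIdx F 0 * aeval B (p i) * natIdx F i
      ∧ natIdx F 0 * aeval B (p i) * natIdx F i ≠ 0 := by
  set FT : Fin (d+1) → Matrix (Fin (d+1)) (Fin (d+1)) K := fun i => (F i)ᵀ with hFT
  have hmulT : ∀ i j, FT i * FT j = if i = j then FT i else 0 := by
    intro i j
    show (F i)ᵀ * (F j)ᵀ = _
    rw [← Matrix.transpose_mul, hmul j i]
    by_cases h : i = j
    · subst h; simp [hFT]
    · rw [if_neg (fun hc => h (hc.symm)), if_neg h, Matrix.transpose_zero]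
  have hsumT : ∑ i, FT i = 1 := by
    have h1 : (∑ i, F i)ᵀ = ((1 : Matrix (Fin (d+1)) (Fin (d+1)) K))ᵀ := by rw [hsum]
    simpa [Matrix.transpose_sum] using h1
  have hneT : ∀ i, FT i ≠ 0 := by
    intro i h
    exact hne i (by simpa [hFT, Matrix.transpose_eq_zero] using h)
  have hTsand : ∀ (X Y Z : Matrix (Fin (d+1)) (Fin (d+1)) K),
      (X * Y * Z)ᵀ = Zᵀ * Yᵀ * Xᵀ := by
    intro X Y Z
    simp [Matrix.transpose_mul, mul_assoc]
  have htri0T : ∀ i j : Fin (d+1), ((i:ℕ)+1 < j ∨ (j:ℕ)+1 < i) → FT i * Bᵀ * FT j = 0 := by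
    intro i j hij
    have h1 : FT i * Bᵀ * FT j = (F j * B * F i)ᵀ := by rw [hTsand]
    rw [h1, htri0 j i (by tauto), Matrix.transpose_zero]
  have htrineT : ∀ i j : Fin (d+1), ((i:ℕ)+1 = j ∨ (j:ℕ)+1 = i) → FT i * Bᵀ * FT j ≠ 0 := by
    intro i j hij h
    apply htrine j i (by tauto)
    have h1 : FT i * Bᵀ * FT j = (F j * B * F i)ᵀ := by rw [hTsand]
    rw [h1, Matrix.transpose_eq_zero] at h
    exact h
  have hnatT : ∀ k, natIdx FT k = (natIdx F k)ᵀ := natIdx_transpose F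
  have haT : ∀ k, k ≤ d → a k = Matrix.trace (natIdx FT k * Bᵀ) := by
    intro k hk
    rw [hnatT, ← Matrix.transpose_mul, Matrix.trace_transpose, Matrix.trace_mul_comm]
    exact ha k hk
  have hxT : ∀ k, 1 ≤ k → k ≤ d →
      x k = Matrix.trace (natIdx FT k * Bᵀ * natIdx FT (k-1) * Bᵀ) := by
    intro k h1 h2
    rw [hnatT, hnatT]
    have h3 : (natIdx F k)ᵀ * Bᵀ * (natIdx F (k-1))ᵀ * Bᵀ
        = (B * (natIdx F (k-1)) * B * natIdx F k)ᵀ := by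
      simp [Matrix.transpose_mul, mul_assoc]
    rw [h3, Matrix.trace_transpose]
    rw [Matrix.trace_mul_comm]
    have h4 : natIdx F k * (B * natIdx F (k-1) * B)
        = natIdx F k * B * natIdx F (k-1) * B := by
      simp [mul_assoc]
    rw [h4]
    exact hx k h1 h2
  have hcc := conc (natIdx FT) Bᵀ (fun k hk => natIdx_ge FT (by omega)) (bridge_mul FT hmulT)
    (bridge_sum FT hsumT) (bridge_tri0 FT Bᵀ htri0T) (bridge_trine FT Bᵀ htrineT)
    (bridge_r1 FT hmulT hsumT hneT) a x haT hx0 hxT p hp0 hrec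
  intro i hi
  obtain ⟨h1, h2⟩ := hcc i hi
  rw [hnatT, hnatT] at h1 h2
  constructor
  · refine Matrix.transpose_inj.mp ?_
    rw [Matrix.transpose_mul, hTsand, aeval_transpose]
    rw [mul_assoc]
    exact h1
  · intro h
    apply h2
    have h5 : (natIdx F 0 * aeval B (p i) * natIdx F i)ᵀ = 0 := by
      rw [h, Matrix.transpose_zero]
    rw [hTsand, aeval_transpose, mul_assoc] at h5
    exact h5

end Wrappers

end AWDual

open AWDual

theorem stmt17 {K : Type*} [Field K] {d : ℕ} (L : LeonardSystem K d)
    (a x : ℕ → K)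
    (ha : ∀ i : Fin (d+1), a (i:ℕ) = Matrix.trace (L.Es i * L.A))
    (hx0 : x 0 = 0)
    (hx : ∀ i : Fin (d+1), 1 ≤ (i:ℕ) →
      x (i:ℕ) = Matrix.trace (L.Es i * L.A * natIdx L.Es ((i:ℕ) - 1) * L.A))
    (p : ℕ → Polynomial K) (hp0 : p 0 = 1)
    (hrec : ∀ i : ℕ, i ≤ d →
      Polynomial.X * p i = p (i+1) + Polynomial.C (a i) * p i + Polynomial.C (x i) * p (i-1))
    (as xs : ℕ → K)
    (has : ∀ i : Fin (d+1), as (i:ℕ) = Matrix.trace (L.E i * L.As))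
    (hxs0 : xs 0 = 0)
    (hxs : ∀ i : Fin (d+1), 1 ≤ (i:ℕ) →
      xs (i:ℕ) = Matrix.trace (L.E i * L.As * natIdx L.E ((i:ℕ) - 1) * L.As))
    (q : ℕ → Polynomial K) (hq0 : q 0 = 1)
    (hqrec : ∀ i : ℕ, i ≤ d →
      Polynomial.X * q i = q (i+1) + Polynomial.C (as i) * q i + Polynomial.C (xs i) * q (i-1))
    :
    ∀ i j : Fin (d+1),
      (p (i:ℕ)).eval (L.θ j) / (p (i:ℕ)).eval (L.θ 0) =
      (q (j:ℕ)).eval (L.θs i) / (q (j:ℕ)).eval (L.θs 0) := by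
  obtain ⟨A, As, E, Es, θ, θs, θinj, θsinj, Ene, Esne, Emul, Esmul, Esum, Essum, Aeq, Aseq,
    EAsE0, EAsEne, EsAEs0, EsAEsne⟩ := L
  simp only at ha hx has hxs ⊢
  -- trace hypothesis conversions to natIdx form
  have ha' : ∀ k, k ≤ d → a k = Matrix.trace (natIdx Es k * A) := by
    intro k hk
    rw [natIdx_lt Es (by omega : k < d+1)]
    exact ha ⟨k, by omega⟩
  have hx' : ∀ k, 1 ≤ k → k ≤ d →
      x k = Matrix.trace (natIdx Es k * A * natIdx Es (k-1) * A) := by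
    intro k h1 h2
    rw [natIdx_lt Es (by omega : k < d+1)]
    exact hx ⟨k, by omega⟩ (by simpa using h1)
  have has' : ∀ k, k ≤ d → as k = Matrix.trace (natIdx E k * As) := by
    intro k hk
    rw [natIdx_lt E (by omega : k < d+1)]
    exact has ⟨k, by omega⟩
  have hxs' : ∀ k, 1 ≤ k → k ≤ d →
      xs k = Matrix.trace (natIdx E k * As * natIdx E (k-1) * As) := by
    intro k h1 h2
    rw [natIdx_lt E (by omega : k < d+1)]
    exact hxs ⟨k, by omega⟩ (by simpa using h1)
  -- concentration results
  have RCp := conc_right Es A Esmul Essum Esne EsAEs0 EsAEsne a x ha' hx0 hx' p hp0 hrec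
  have LCp := conc_left Es A Esmul Essum Esne EsAEs0 EsAEsne a x ha' hx0 hx' p hp0 hrec
  have RCq := conc_right E As Emul Esum Ene EAsE0 EAsEne as xs has' hxs0 hxs' q hq0 hqrec
  have LCq := conc_left E As Emul Esum Ene EAsE0 EAsEne as xs has' hxs0 hxs' q hq0 hqrec
  have PPp := ppath_right Es A Esmul Essum EsAEs0
  have PPq := ppath_right E As Emul Esum EAsE0
  -- spectral decompositions
  have SPp : ∀ f : Polynomial K, aeval A f = ∑ l, (f.eval (θ l)) • E l :=
    fun f => spec A E θ Emul Esum Aeq f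
  have SPq : ∀ f : Polynomial K, aeval As f = ∑ l, (f.eval (θs l)) • Es l :=
    fun f => spec As Es θs Esmul Essum Aseq f
  have SPp_l := spec_mul_left A E θ Emul Esum Aeq
  have SPq_r := spec_mul_right As Es θs Esmul Essum Aseq
  have SPq_l := spec_mul_left As Es θs Esmul Essum Aseq
  -- monicity
  have MOp := monic_rec a x p hp0 hrec
  have MOq := monic_rec as xs q hq0 hqrec
  -- vanishing lemmas
  have vanP := van (natIdx Es) A p MOp
    (fun m hm => by rw [← mul_assoc]; exact (LCp m hm).2) PPp
  have vanQ := van (natIdx E) As q MOq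
    (fun m hm => by rw [← mul_assoc]; exact (LCq m hm).2) PPq
  -- nonvanishing of products of idempotents
  have NVp : ∀ i : Fin (d+1), natIdx E 0 * Es i ≠ 0 :=
    nonv (natIdx E) As Es θs θsinj SPq vanQ
  have NVq : ∀ j : Fin (d+1), natIdx Es 0 * E j ≠ 0 :=
    nonv (natIdx Es) A E θ θinj SPp vanP
  have hH0 : natIdx E 0 = E 0 := by
    rw [natIdx_lt E (by omega : 0 < d+1)]
    rfl
  have hG0 : natIdx Es 0 = Es 0 := by
    rw [natIdx_lt Es (by omega : 0 < d+1)]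
    rfl
  rw [hH0] at NVp
  rw [hG0] at NVq
  -- main computation
  intro i j
  have hi' : (i : ℕ) ≤ d := by omega
  have hj' : (j : ℕ) ≤ d := by omega
  set P : Matrix (Fin (d+1)) (Fin (d+1)) K := aeval A (p (i:ℕ)) with hP
  set Q : Matrix (Fin (d+1)) (Fin (d+1)) K := aeval As (q (j:ℕ)) with hQ
  have F1 : P * Es 0 = Es i * (P * Es 0) := by
    have h := (RCp (i:ℕ) hi').1
    rwa [hG0, natIdx_fin Es i] at h
  have F2 : Es i * (P * Es 0) ≠ 0 := by
    have h := (RCp (i:ℕ) hi').2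
    rwa [hG0, natIdx_fin Es i] at h
  have F3 : E 0 * Q = E 0 * Q * E j := by
    have h := (LCq (j:ℕ) hj').1
    rwa [hH0, natIdx_fin E j] at h
  have F1q : Q * E 0 = E j * (Q * E 0) := by
    have h := (RCq (j:ℕ) hj').1
    rwa [hH0, natIdx_fin E j] at h
  have F2q : E j * (Q * E 0) ≠ 0 := by
    have h := (RCq (j:ℕ) hj').2
    rwa [hH0, natIdx_fin E j] at h
  -- scalar pulls
  have s1 : Q * Es i = ((q (j:ℕ)).eval (θs i)) • Es i := SPq_r (q (j:ℕ)) i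
  have s2 : E 0 * P = ((p (i:ℕ)).eval (θ 0)) • E 0 := SPp_l (p (i:ℕ)) 0
  have s3 : E j * P = ((p (i:ℕ)).eval (θ j)) • E j := SPp_l (p (i:ℕ)) j
  have s4 : Q * Es 0 = ((q (j:ℕ)).eval (θs 0)) • Es 0 := SPq_r (q (j:ℕ)) 0
  have s5 : Es 0 * Q = ((q (j:ℕ)).eval (θs 0)) • Es 0 := SPq_l (q (j:ℕ)) 0
  -- the two evaluations of Z
  have Eval1 : (E 0 * Q) * (Es i * (P * Es 0))
      = ((q (j:ℕ)).eval (θs i) * (p (i:ℕ)).eval (θ 0)) • (E 0 * Es 0) := by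
    calc (E 0 * Q) * (Es i * (P * Es 0))
        = E 0 * ((Q * Es i) * (P * Es 0)) := by simp only [mul_assoc]
      _ = ((q (j:ℕ)).eval (θs i)) • (E 0 * (Es i * (P * Es 0))) := by
          rw [s1, smul_mul_assoc, mul_smul_comm]
      _ = ((q (j:ℕ)).eval (θs i)) • (E 0 * (P * Es 0)) := by rw [← F1]
      _ = ((q (j:ℕ)).eval (θs i)) • (((p (i:ℕ)).eval (θ 0)) • (E 0 * Es 0)) := by
          rw [← mul_assoc, s2, smul_mul_assoc]
      _ = ((q (j:ℕ)).eval (θs i) * (p (i:ℕ)).eval (θ 0)) • (E 0 * Es 0) := by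
          rw [smul_smul]
  have Eval2 : (E 0 * Q) * (Es i * (P * Es 0))
      = ((p (i:ℕ)).eval (θ j) * (q (j:ℕ)).eval (θs 0)) • (E 0 * Es 0) := by
    calc (E 0 * Q) * (Es i * (P * Es 0))
        = (E 0 * Q) * (P * Es 0) := by rw [← F1]
      _ = (E 0 * Q * E j) * (P * Es 0) := by rw [← F3]
      _ = (E 0 * Q) * ((E j * P) * Es 0) := by simp only [mul_assoc]
      _ = ((p (i:ℕ)).eval (θ j)) • ((E 0 * Q) * (E j * Es 0)) := by
          rw [s3, smul_mul_assoc, mul_smul_comm]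
      _ = ((p (i:ℕ)).eval (θ j)) • ((E 0 * Q * E j) * Es 0) := by simp only [mul_assoc]
      _ = ((p (i:ℕ)).eval (θ j)) • ((E 0 * Q) * Es 0) := by rw [← F3]
      _ = ((p (i:ℕ)).eval (θ j)) • (E 0 * (Q * Es 0)) := by simp only [mul_assoc]
      _ = ((p (i:ℕ)).eval (θ j)) • (((q (j:ℕ)).eval (θs 0)) • (E 0 * Es 0)) := by
          rw [s4, mul_smul_comm]
      _ = ((p (i:ℕ)).eval (θ j) * (q (j:ℕ)).eval (θs 0)) • (E 0 * Es 0) := by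
          rw [smul_smul]
  -- nonvanishing of the denominators
  have hp0ne : (p (i:ℕ)).eval (θ 0) ≠ 0 := by
    have h6 : ((p (i:ℕ)).eval (θ 0)) • (E 0 * Es 0) = E 0 * (P * Es 0) := by
      rw [← mul_assoc, s2, smul_mul_assoc]
    have h7 : E 0 * (P * Es 0) ≠ 0 := by
      rw [F1, ← mul_assoc]
      obtain ⟨u, v, hEsi, hdot⟩ := exists_vecMulVec Es Esmul Essum Esne i
      exact outer_prod_ne_zero u v hEsi (NVp i) F2
    intro hc
    rw [hc, zero_smul] at h6
    exact h7 h6.symm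
  have hq0ne : (q (j:ℕ)).eval (θs 0) ≠ 0 := by
    have h8 : ((q (j:ℕ)).eval (θs 0)) • (Es 0 * E 0) = Es 0 * (Q * E 0) := by
      rw [← mul_assoc, s5, smul_mul_assoc]
    have h9 : Es 0 * (Q * E 0) ≠ 0 := by
      rw [F1q, ← mul_assoc]
      obtain ⟨u, v, hEj, hdot⟩ := exists_vecMulVec E Emul Esum Ene j
      exact outer_prod_ne_zero u v hEj (NVq j) F2q
    intro hc
    rw [hc, zero_smul] at h8
    exact h9 h8.symm
  -- conclude
  have hscal : (q (j:ℕ)).eval (θs i) * (p (i:ℕ)).eval (θ 0)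
      = (p (i:ℕ)).eval (θ j) * (q (j:ℕ)).eval (θs 0) :=
    smul_cancel (NVp 0) (Eval1.symm.trans Eval2)
  rw [div_eq_div_iff hp0ne hq0ne]
  linear_combination hscal.symm
end
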